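/- arXiv:1602.06843 — 9 statements merged into one kernel-verified Lean document; each statement's English description precedes it below -/
import Mathlib

section
/- Let α ∈ ℂ with α ≠ 0, and let g be holomorphic on a neighborhood of α with a zero of order m ≥ 1 at α, i.e. g(z) = (z−α)^m h(z) with h holomorphic near α and h(α) ≠ 0. Then the function ν_g(z) = z − g(z)/(z g'(z)) has a removable singularity at α; its holomorphic extension F satisfies F(α) = α and F'(α) = 1 − 1/(mα), and for all sufficiently small r > 0, (1/(2πi)) ∮_{|z−α|=r} dz/(z − ν_g(z)) = mα. -/
open Complex

lemma circleIntegral_add' {f g : ℂ → ℂ} {c : ℂ} {R : ℝ}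
    (hf : CircleIntegrable f c R) (hg : CircleIntegrable g c R) :
    (∮ z in C(c, R), (f z + g z)) = (∮ z in C(c, R), f z) + ∮ z in C(c, R), g z := by
  simp only [circleIntegral, smul_add]
  exact intervalIntegral.integral_add hf.out hg.out

/-- The nu function of a meromorphic function `g`: `ν_g(z) = z - g(z)/(z g'(z))`. -/
noncomputable def nu (g : ℂ → ℂ) (z : ℂ) : ℂ := z - g z / (z * deriv g z)

/-- If `g` has a zero of order `m ≥ 1` at `α ≠ 0`, then `ν_g` has a removable singularity
at `α`; the holomorphic extension `F` satisfies `F α = α`, `F' α = 1 - 1/(mα)`, and the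
holomorphic index of `ν_g` at `α` is `mα`. -/
theorem nu_at_zero_of_order
    (α : ℂ) (hα : α ≠ 0) (m : ℕ) (hm : 1 ≤ m)
    (g h : ℂ → ℂ) (U : Set ℂ) (hU : IsOpen U) (hαU : α ∈ U)
    (hh : DifferentiableOn ℂ h U) (hhα : h α ≠ 0)
    (hfact : ∀ z ∈ U, g z = (z - α) ^ m * h z) :
    ∃ (F : ℂ → ℂ) (V : Set ℂ), IsOpen V ∧ α ∈ V ∧ DifferentiableOn ℂ F V ∧
      (∀ z ∈ V, z ≠ α → F z = nu g z) ∧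
      F α = α ∧ deriv F α = 1 - 1 / (m * α) ∧
      ∃ r₀ > 0, ∀ r : ℝ, 0 < r → r < r₀ →
        (2 * Real.pi * Complex.I)⁻¹ * (∮ z in C(α, r), (z - nu g z)⁻¹) = m * α := by
  obtain ⟨k, rfl⟩ : ∃ k, m = k + 1 := ⟨m - 1, (Nat.succ_pred_eq_of_pos hm).symm⟩
  set m := k + 1 with hmdef
  have hmC : (m : ℂ) ≠ 0 := Nat.cast_ne_zero.mpr (Nat.succ_ne_zero k)
  -- analyticity of h and differentiability of deriv h
  have hhan : AnalyticOnNhd ℂ h U := hh.analyticOnNhd hU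
  have hh' : DifferentiableOn ℂ (deriv h) U := hhan.deriv.differentiableOn
  -- the auxiliary function D
  set D : ℂ → ℂ := fun z => (m : ℂ) * h z + (z - α) * deriv h z with hDdef
  have hDdiff : DifferentiableOn ℂ D U := by
    apply DifferentiableOn.add
    · exact (differentiableOn_const _).mul hh
    · exact ((differentiableOn_id.sub (differentiableOn_const _))).mul hh'
  have hDα : D α = (m : ℂ) * h α := by simp [hDdef]
  have hDαne : D α ≠ 0 := by rw [hDα]; exact mul_ne_zero hmC hhα
  -- the open set V
  set V : Set ℂ := ((U ∩ D ⁻¹' {0}ᶜ) ∩ h ⁻¹' {0}ᶜ) ∩ {(0 : ℂ)}ᶜ with hVdef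
  have hVopen : IsOpen V := by
    apply IsOpen.inter _ (isOpen_compl_singleton)
    apply ContinuousOn.isOpen_inter_preimage _ _ isOpen_compl_singleton
    · exact hh.continuousOn.mono (by intro z hz; exact hz.1)
    · exact ContinuousOn.isOpen_inter_preimage hDdiff.continuousOn hU isOpen_compl_singleton
  have hαV : α ∈ V := ⟨⟨⟨hαU, hDαne⟩, hhα⟩, hα⟩
  have hVU : V ⊆ U := fun z hz => hz.1.1.1
  have hVD : ∀ z ∈ V, D z ≠ 0 := fun z hz => hz.1.1.2
  have hVh : ∀ z ∈ V, h z ≠ 0 := fun z hz => hz.1.2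
  have hV0 : ∀ z ∈ V, z ≠ 0 := fun z hz => hz.2
  -- derivative of g on U
  have hgd : ∀ z ∈ U, deriv g z = (z - α) ^ k * D z := by
    intro z hz
    have hder : HasDerivAt (fun w => (w - α) ^ m * h w)
        ((↑m * (z - α) ^ (m - 1) * 1) * h z + (z - α) ^ m * deriv h z) z := by
      exact (((hasDerivAt_id z).sub_const α).pow m).mul
        ((hh.differentiableAt (hU.mem_nhds hz)).hasDerivAt)
    have heq : g =ᶠ[nhds z] fun w => (w - α) ^ m * h w :=
      Filter.eventuallyEq_of_mem (hU.mem_nhds hz) hfact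
    rw [Filter.EventuallyEq.deriv_eq heq, hder.deriv]
    simp only [hmdef, Nat.add_sub_cancel, hDdef]
    ring
  -- the extension F
  set F : ℂ → ℂ := fun z => z - (z - α) * h z / (z * D z) with hFdef
  refine ⟨F, V, hVopen, hαV, ?_, ?_, ?_, ?_, ?_⟩
  · -- differentiability of F on V
    apply DifferentiableOn.sub differentiableOn_id
    apply DifferentiableOn.div
    · exact ((differentiableOn_id.sub (differentiableOn_const _))).mul (hh.mono hVU)
    · exact differentiableOn_id.mul (hDdiff.mono hVU)
    · intro z hz; exact mul_ne_zero (hV0 z hz) (hVD z hz)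
  · -- F = nu g on V \ {α}
    intro z hz hzα
    have hzU := hVU hz
    have hgz : g z = (z - α) ^ m * h z := hfact z hzU
    have hsub : z - α ≠ 0 := sub_ne_zero.mpr hzα
    rw [hFdef, nu, hgd z hzU, hgz]
    have hpk : (z - α) ^ k ≠ 0 := pow_ne_zero k hsub
    rw [hmdef, pow_succ,
      show (z - α) ^ k * (z - α) * h z = (z - α) ^ k * ((z - α) * h z) by ring,
      show z * ((z - α) ^ k * D z) = (z - α) ^ k * (z * D z) by ring,
      mul_div_mul_left _ _ hpk]
  · -- F α = α
    simp [hFdef]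
  · -- deriv F α = 1 - 1/(mα)
    have hhdα : HasDerivAt h (deriv h α) α :=
      (hh.differentiableAt (hU.mem_nhds hαU)).hasDerivAt
    have hh'dα : HasDerivAt (deriv h) (deriv (deriv h) α) α :=
      (hh'.differentiableAt (hU.mem_nhds hαU)).hasDerivAt
    have hN : HasDerivAt (fun z => (z - α) * h z) (1 * h α + (α - α) * deriv h α) α :=
      ((hasDerivAt_id α).sub_const α).mul hhdα
    have hD : HasDerivAt D ((m : ℂ) * deriv h α + ((1 * deriv h α + (α - α) * deriv (deriv h) α))) α := by
      exact (hhdα.const_mul (m : ℂ)).add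
        (((hasDerivAt_id α).sub_const α).mul hh'dα)
    have hDen : HasDerivAt (fun z => z * D z)
        (1 * D α + α * ((m : ℂ) * deriv h α + ((1 * deriv h α + (α - α) * deriv (deriv h) α)))) α :=
      (hasDerivAt_id α).mul hD
    have hDenα : α * D α ≠ 0 := mul_ne_zero hα hDαne
    have hQ := hN.div hDen hDenα
    have hF : HasDerivAt F (1 - ((1 * h α + (α - α) * deriv h α) * (α * D α) -
        (α - α) * h α * (1 * D α + α * ((m : ℂ) * deriv h α +
        (1 * deriv h α + (α - α) * deriv (deriv h) α)))) / (α * D α) ^ 2) α :=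
      (hasDerivAt_id α).sub hQ
    rw [hF.deriv, hDα]
    have hαm : (m : ℂ) * α ≠ 0 := mul_ne_zero hmC hα
    field_simp
    ring
  · -- the circle integral
    obtain ⟨ε, hε, hball⟩ := Metric.isOpen_iff.mp hVopen α hαV
    refine ⟨ε, hε, fun r hr hrε => ?_⟩
    have hsphere : Metric.sphere α r ⊆ V := fun z hz => by
      apply hball
      rw [Metric.mem_ball, Metric.mem_sphere.mp hz]
      exact hrε
    have hclosed : Metric.closedBall α r ⊆ V := fun z hz =>
      hball (lt_of_le_of_lt (Metric.mem_closedBall.mp hz) hrε)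
    -- the regular part E
    set E : ℂ → ℂ := fun z => ((m : ℂ) * h z + z * deriv h z) / h z with hEdef
    have hEdiff : DifferentiableOn ℂ E V := by
      apply DifferentiableOn.div
      · exact ((differentiableOn_const _).mul (hh.mono hVU)).add
          (differentiableOn_id.mul (hh'.mono hVU))
      · exact hh.mono hVU
      · exact hVh
    have hkey : ∀ z ∈ Metric.sphere α r, (z - nu g z)⁻¹ = (↑m * α) • (z - α)⁻¹ + E z := by
      intro z hz
      have hzV : z ∈ V := hsphere hz
      have hzα : z ≠ α := by
        rintro rfl
        rw [Metric.mem_sphere, dist_self] at hz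
        exact hr.ne hz
      have hsub : z - α ≠ 0 := sub_ne_zero.mpr hzα
      have hzU := hVU hzV
      have hgz : g z = (z - α) ^ m * h z := hfact z hzU
      have hz0 := hV0 z hzV
      have hzD := hVD z hzV
      have hzh := hVh z hzV
      have hpk : (z - α) ^ k ≠ 0 := pow_ne_zero k hsub
      rw [nu, hgz, hgd z hzU, sub_sub_cancel]
      have hL : ((z - α) ^ m * h z / (z * ((z - α) ^ k * D z)))⁻¹
          = z * D z / ((z - α) * h z) := by
        rw [inv_div, hmdef, pow_succ,
          show (z - α) ^ k * (z - α) * h z = (z - α) ^ k * ((z - α) * h z) by ring,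
          show z * ((z - α) ^ k * D z) = (z - α) ^ k * (z * D z) by ring,
          mul_div_mul_left _ _ hpk]
      rw [hL, hEdef]
      simp only [smul_eq_mul, hDdef, hmdef]
      field_simp
      ring
    rw [circleIntegral.integral_congr (le_of_lt hr) hkey]
    have hne : ∀ z ∈ Metric.sphere α r, z - α ≠ 0 := by
      intro z hz heq
      have hdz : dist z α = r := hz
      rw [sub_eq_zero] at heq
      rw [heq, dist_self] at hdz
      exact hr.ne hdz
    have hint1 : CircleIntegrable (fun z => ((m : ℂ) * α) • (z - α)⁻¹) α r :=
      ContinuousOn.circleIntegrable hr.le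
        (((continuousOn_const : ContinuousOn (fun _ : ℂ => ((m : ℂ) * α)) (Metric.sphere α r)).smul
          (((continuous_id.sub continuous_const : Continuous (fun z : ℂ => z - α)).continuousOn).inv₀ hne)) :
            ContinuousOn (fun z => ((m : ℂ) * α) • (z - α)⁻¹) (Metric.sphere α r))
    have hint2 : CircleIntegrable E α r :=
      ContinuousOn.circleIntegrable (le_of_lt hr)
        ((hEdiff.continuousOn).mono hsphere)
    rw [circleIntegral_add' hint1 hint2]
    rw [circleIntegral.integral_smul]
    rw [circleIntegral.integral_sub_inv_of_mem_ball (Metric.mem_ball_self hr)]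
    have hE0 : (∮ z in C(α, r), E z) = 0 := by
      apply circleIntegral_eq_zero_of_differentiable_on_off_countable (le_of_lt hr)
        Set.countable_empty ((hEdiff.continuousOn).mono hclosed)
      intro z hz
      exact hEdiff.differentiableAt (hVopen.mem_nhds (hclosed (Metric.ball_subset_closedBall hz.1)))
    rw [hE0, add_zero, smul_eq_mul]
    field_simp [Real.pi_ne_zero, Complex.I_ne_zero]
end

section
/- Let α ∈ ℂ with α ≠ 0, and let g have a pole of order m ≥ 1 at α, i.e. g(z) = (z−α)^{−m} h(z) on a punctured neighborhood of α with h holomorphic near α and h(α) ≠ 0. Then the function ν_g(z) = z − g(z)/(z g'(z)) has a removable singularity at α; its holomorphic extension F satisfies F(α) = α and F'(α) = 1 + 1/(mα), and for all sufficiently small r > 0, (1/(2πi)) ∮_{|z−α|=r} dz/(z − ν_g(z)) = −mα. -/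
open Complex Metric

private lemma nuA (α z a b : ℂ) (k : ℕ) (hz : z ≠ α) :
    (a / (z-α)^(k+1)) / (z * ((b * (z-α)^(k+1) - a * (↑(k+1) * (z-α)^k * 1)) / ((z-α)^(k+1))^2))
    = a*(z-α)/(z*(b*(z-α) - (↑(k+1):ℂ)*a)) := by
  have hP : (z-α) ≠ 0 := sub_ne_zero.mpr hz
  have hPk : (z-α)^k ≠ 0 := pow_ne_zero _ hP
  have hQ : b * (z-α)^(k+1) - a * (↑(k+1) * (z-α)^k * 1)
      = (z-α)^k * (b*(z-α) - (↑(k+1):ℂ)*a) := by ring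
  have h2 : ((z-α)^(k+1))^2 = (z-α)^k * (z-α)^(k+2) := by ring
  rw [hQ, h2, mul_div_mul_left _ _ hPk, mul_div_assoc', div_div_eq_mul_div]
  have h3 : a / (z-α)^(k+1) * (z-α)^(k+2) = a * (z-α) := by
    field_simp; ring
  rw [h3]

private lemma nuB (α z a b : ℂ) (k : ℕ) (hz : z ≠ α) (ha : a ≠ 0) :
    ((a / (z-α)^(k+1)) / (z * ((b * (z-α)^(k+1) - a * (↑(k+1) * (z-α)^k * 1)) / ((z-α)^(k+1))^2)))⁻¹
    = (z * b / a - (↑(k+1):ℂ)) - ((↑(k+1):ℂ)*α)*(z-α)⁻¹ := by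
  rw [nuA α z a b k hz, inv_div]
  have hP : (z-α) ≠ 0 := sub_ne_zero.mpr hz
  field_simp
  ring

/-- If `g` has a pole of order `m ≥ 1` at `α ≠ 0`, then `ν_g` has a removable singularity
at `α`; the holomorphic extension `F` satisfies `F α = α`, `F' α = 1 + 1/(mα)`, and the
holomorphic index of `ν_g` at `α` is `-mα`. -/
theorem nu_at_pole_of_order
    (α : ℂ) (hα : α ≠ 0) (m : ℕ) (hm : 1 ≤ m)
    (g h : ℂ → ℂ) (U : Set ℂ) (hU : IsOpen U) (hαU : α ∈ U)
    (hh : DifferentiableOn ℂ h U) (hhα : h α ≠ 0)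
    (hfact : ∀ z ∈ U \ {α}, g z = h z / (z - α) ^ m) :
    ∃ (F : ℂ → ℂ) (V : Set ℂ), IsOpen V ∧ α ∈ V ∧ DifferentiableOn ℂ F V ∧
      (∀ z ∈ V, z ≠ α → F z = nu g z) ∧
      F α = α ∧ deriv F α = 1 + 1 / (m * α) ∧
      ∃ r₀ > 0, ∀ r : ℝ, 0 < r → r < r₀ →
        (2 * Real.pi * Complex.I)⁻¹ * (∮ z in C(α, r), (z - nu g z)⁻¹) = -(m * α) := by
  obtain ⟨k, rfl⟩ : ∃ k, m = k + 1 := ⟨m - 1, by omega⟩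
  have hmC : ((k+1 : ℕ) : ℂ) ≠ 0 := Nat.cast_ne_zero.mpr (by omega)
  set D : ℂ → ℂ := fun z => z * (deriv h z * (z - α) - ((k+1:ℕ):ℂ) * h z) with hD_def
  set F : ℂ → ℂ := fun z => z - h z * (z - α) / D z with hF_def
  -- differentiability of deriv h
  have hd : DifferentiableOn ℂ (deriv h) U :=
    ((hh.analyticOnNhd hU).deriv).differentiableOn
  have hDdiff : DifferentiableOn ℂ D U :=
    differentiableOn_id.mul
      ((hd.mul (differentiableOn_id.sub_const α)).sub (hh.const_mul _))
  have hDα : D α ≠ 0 := by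
    have : D α = α * (0 - ((k+1:ℕ):ℂ) * h α) := by simp [hD_def]
    rw [this]
    exact mul_ne_zero hα (by simpa using mul_ne_zero hmC hhα)
  -- the open set V
  set V : Set ℂ :=
    ((U ∩ D ⁻¹' {(0:ℂ)}ᶜ) ∩ h ⁻¹' {(0:ℂ)}ᶜ) ∩ {(0:ℂ)}ᶜ with hV_def
  have hV₁ : IsOpen (U ∩ D ⁻¹' {(0:ℂ)}ᶜ) :=
    hDdiff.continuousOn.isOpen_inter_preimage hU isOpen_compl_singleton
  have hV₂ : IsOpen ((U ∩ D ⁻¹' {(0:ℂ)}ᶜ) ∩ h ⁻¹' {(0:ℂ)}ᶜ) :=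
    (hh.continuousOn.mono Set.inter_subset_left).isOpen_inter_preimage hV₁
      isOpen_compl_singleton
  have hVopen : IsOpen V := hV₂.inter isOpen_compl_singleton
  have hVsubU : V ⊆ U := fun z hz => hz.1.1.1
  have hVD : ∀ z ∈ V, D z ≠ 0 := fun z hz => hz.1.1.2
  have hVh : ∀ z ∈ V, h z ≠ 0 := fun z hz => hz.1.2
  have hVz : ∀ z ∈ V, z ≠ 0 := fun z hz => hz.2
  have hαV : α ∈ V := ⟨⟨⟨hαU, hDα⟩, hhα⟩, hα⟩
  -- derivative of g on U \ {α}
  have hg' : ∀ z ∈ U, z ≠ α → deriv g z =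
      (deriv h z * (z-α)^(k+1) - h z * (↑(k+1) * (z-α)^k * 1)) / ((z-α)^(k+1))^2 := by
    intro z hzU hzα
    have hev : g =ᶠ[nhds z] fun w => h w / (w - α) ^ (k+1) := by
      filter_upwards [(hU.sdiff isClosed_singleton).mem_nhds ⟨hzU, hzα⟩] with w hw
      exact hfact w hw
    rw [hev.deriv_eq]
    have h1 : HasDerivAt h (deriv h z) z :=
      (hh.differentiableAt (hU.mem_nhds hzU)).hasDerivAt
    have h2 : HasDerivAt (fun w : ℂ => (w - α) ^ (k+1))
        (↑(k+1) * (z - α) ^ k * 1) z := by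
      have := (((hasDerivAt_id z).sub_const α).fun_pow (k+1))
      simpa using this
    exact (h1.div h2 (pow_ne_zero _ (sub_ne_zero.mpr hzα))).deriv
  -- F equals nu on V \ {α}
  have hFnu : ∀ z ∈ V, z ≠ α → F z = nu g z := by
    intro z hzV hzα
    have hzU := hVsubU hzV
    rw [hF_def]
    simp only [nu]
    rw [hfact z ⟨hzU, hzα⟩, hg' z hzU hzα, nuA α z (h z) (deriv h z) k hzα]
  -- F is differentiable on V
  have hFdiff : DifferentiableOn ℂ F V :=
    differentiableOn_id.sub
      (((hh.mono hVsubU).mul (differentiableOn_id.sub_const α)).div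
        (hDdiff.mono hVsubU) hVD)
  -- value at α
  have hFα : F α = α := by simp [hF_def]
  -- derivative at α
  have hdF : deriv F α = 1 + 1 / (((k+1:ℕ):ℂ) * α) := by
    have hhd : HasDerivAt h (deriv h α) α :=
      (hh.differentiableAt (hU.mem_nhds hαU)).hasDerivAt
    have hhd2 : HasDerivAt (deriv h) (deriv (deriv h) α) α :=
      (hd.differentiableAt (hU.mem_nhds hαU)).hasDerivAt
    have hnum : HasDerivAt (fun z => h z * (z - α))
        (deriv h α * (α - α) + h α * 1) α :=
      hhd.mul ((hasDerivAt_id α).sub_const α)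
    have hden : HasDerivAt D
        ((1 : ℂ) * (deriv h α * (α - α) - ((k+1:ℕ):ℂ) * h α) +
          α * ((deriv (deriv h) α * (α - α) + deriv h α * 1) -
            ((k+1:ℕ):ℂ) * deriv h α)) α := by
      exact (hasDerivAt_id α).mul
        ((hhd2.mul ((hasDerivAt_id α).sub_const α)).sub (hhd.const_mul _))
    have hq := hnum.div hden hDα
    have hF' : HasDerivAt F (1 - ((deriv h α * (α - α) + h α * 1) * D α -
        h α * (α - α) * ((1 : ℂ) * (deriv h α * (α - α) - ((k+1:ℕ):ℂ) * h α) +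
          α * ((deriv (deriv h) α * (α - α) + deriv h α * 1) -
            ((k+1:ℕ):ℂ) * deriv h α))) / D α ^ 2) α :=
      (hasDerivAt_id α).sub hq
    rw [hF'.deriv]
    have hDαval : D α = α * (0 - ((k+1:ℕ):ℂ) * h α) := by simp [hD_def]
    rw [hDαval]
    have he : (α * (0 - ((k+1:ℕ):ℂ) * h α)) = -(((k+1:ℕ):ℂ) * α * h α) := by ring
    rw [he]
    have hk1 : ((k:ℂ) + 1) ≠ 0 := by push_cast at hmC; exact hmC
    field_simp [hk1]
    ring
  refine ⟨F, V, hVopen, hαV, hFdiff, hFnu, hFα, hdF, ?_⟩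
  -- the contour integral
  obtain ⟨r₀, hr₀, hball⟩ : ∃ r₀ > 0, closedBall α r₀ ⊆ V :=
    (nhds_basis_closedBall.mem_iff).mp (hVopen.mem_nhds hαV)
  refine ⟨r₀, hr₀, fun r hr hrr₀ => ?_⟩
  have hsub : closedBall α r ⊆ V :=
    (closedBall_subset_closedBall hrr₀.le).trans hball
  have hsphere : ∀ z ∈ sphere α r, z ∈ V := fun z hz =>
    hsub (sphere_subset_closedBall hz)
  have hsphere_ne : ∀ z ∈ sphere α r, z ≠ α := by
    intro z hz hzz
    rw [mem_sphere_iff_norm, hzz] at hz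
    simp at hz
    exact hr.ne' hz.symm
  set G : ℂ → ℂ := fun z => z * deriv h z / h z - ((k+1:ℕ):ℂ) with hG_def
  have hGdiff : DifferentiableOn ℂ G V :=
    ((differentiableOn_id.mul (hd.mono hVsubU)).div (hh.mono hVsubU) hVh).sub_const _
  have key : ∀ z ∈ sphere α r,
      (z - nu g z)⁻¹ = G z - (((k+1:ℕ):ℂ) * α) * (z - α)⁻¹ := by
    intro z hz
    have hzV := hsphere z hz
    have hzα := hsphere_ne z hz
    simp only [nu, sub_sub_cancel]
    rw [hfact z ⟨hVsubU hzV, hzα⟩, hg' z (hVsubU hzV) hzα]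
    exact nuB α z (h z) (deriv h z) k hzα (hVh z hzV)
  rw [circleIntegral.integral_congr hr.le (fun z hz => key z hz)]
  have hint1 : CircleIntegrable G α r :=
    ContinuousOn.circleIntegrable hr.le
      (hGdiff.continuousOn.mono fun z hz => hsphere z hz)
  have hint2 : CircleIntegrable (fun z => (((k+1:ℕ):ℂ) * α) * (z - α)⁻¹) α r :=
    ContinuousOn.circleIntegrable hr.le
      (continuousOn_const.mul ((continuousOn_id.sub continuousOn_const).inv₀
        fun z hz => sub_ne_zero.mpr (hsphere_ne z hz)))
  rw [circleIntegral.integral_sub hint1 hint2]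
  have hG0 : (∮ z in C(α, r), G z) = 0 := by
    refine Complex.circleIntegral_eq_zero_of_differentiable_on_off_countable hr.le
      Set.countable_empty (hGdiff.continuousOn.mono hsub) fun z hz => ?_
    exact hGdiff.differentiableAt
      (hVopen.mem_nhds (hsub (ball_subset_closedBall hz.1)))
  have hI : (∮ z in C(α, r), (((k+1:ℕ):ℂ) * α) * (z - α)⁻¹)
      = (((k+1:ℕ):ℂ) * α) * (2 * Real.pi * I) := by
    have hs := circleIntegral.integral_smul (((k+1:ℕ):ℂ) * α)
      (fun z => (z - α)⁻¹) α r
    simp only [smul_eq_mul] at hs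
    rw [hs, circleIntegral.integral_sub_inv_of_mem_ball (mem_ball_self hr)]
  rw [hG0, hI, zero_sub]
  have h2πI : (2 * (Real.pi:ℂ) * I) ≠ 0 := by
    simp [Real.pi_ne_zero, I_ne_zero]
  field_simp
end

section
/- Every fixed point of ν_ζ off the critical strip S is repelling. Precisely: (i) if α ∈ ℂ with Re α ≤ 0 is a zero of ζ of order m ≥ 1, then the holomorphic extension F of ν_ζ(z) = z − ζ(z)/(z ζ'(z)) at α satisfies F(α) = α, F'(α) = 1 − 1/(mα), and |F'(α)| > 1; (ii) ν_ζ has a removable singularity at the pole z = 1 of ζ, and its holomorphic extension F there satisfies F(1) = 1 and F'(1) = 2, so |F'(1)| > 1. -/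
open Complex

/-- The nu function of the Riemann zeta function: `ν_ζ(z) = z - ζ(z)/(z ζ'(z))`. -/
noncomputable def nuZeta (z : ℂ) : ℂ := z - riemannZeta z / (z * deriv riemannZeta z)

open Set Filter

lemma one_lt_abs_one_sub {w : ℂ} (hw : w ≠ 0) (hre : w.re ≤ 0) :
    1 < ‖1 - w‖ := by
  have h1 : ‖1 - w‖ ^ 2 = Complex.normSq (1 - w) := Complex.sq_norm _
  have h2 : Complex.normSq (1 - w) = (1 - w.re) ^ 2 + w.im ^ 2 := by
    simp [Complex.normSq_apply]; ring
  have h3 : 0 < Complex.normSq w := Complex.normSq_pos.2 hw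
  have h4 : Complex.normSq w = w.re ^ 2 + w.im ^ 2 := by simp [Complex.normSq_apply]; ring
  nlinarith [norm_nonneg (1 - w)]

lemma aux_main (N D : ℂ → ℂ) (U : Set ℂ) (α : ℂ) (hU : IsOpen U) (hαU : α ∈ U)
    (hN : DifferentiableOn ℂ N U) (hD : DifferentiableOn ℂ D U) (hDα : D α ≠ 0) :
    ∃ V : Set ℂ, IsOpen V ∧ α ∈ V ∧ V ⊆ U ∧ (∀ z ∈ V, D z ≠ 0) ∧
      DifferentiableOn ℂ (fun z => z - (z - α) * N z / D z) V ∧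
      (fun z => z - (z - α) * N z / D z) α = α ∧
      deriv (fun z => z - (z - α) * N z / D z) α = 1 - N α / D α := by
  refine ⟨U ∩ D ⁻¹' {0}ᶜ, (hD.continuousOn).isOpen_inter_preimage hU isOpen_compl_singleton,
    ⟨hαU, by simpa using hDα⟩, inter_subset_left, fun z hz => by simpa using hz.2, ?_, by simp, ?_⟩
  · refine DifferentiableOn.sub differentiableOn_id ?_
    exact (((differentiableOn_id.sub_const α).mul (hN.mono inter_subset_left)).div
      (hD.mono inter_subset_left)) (fun z hz => by simpa using hz.2)
  · have hNα : HasDerivAt N (deriv N α) α :=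
      (hN.differentiableAt (hU.mem_nhds hαU)).hasDerivAt
    have hDα' : HasDerivAt D (deriv D α) α :=
      (hD.differentiableAt (hU.mem_nhds hαU)).hasDerivAt
    have h1 : HasDerivAt (fun z => (z - α) * N z) (1 * N α + (α - α) * deriv N α) α :=
      ((hasDerivAt_id α).sub_const α).mul hNα
    have h2 : HasDerivAt (fun z => (z - α) * N z / D z)
        (((1 * N α + (α - α) * deriv N α) * D α - (α - α) * N α * deriv D α) / D α ^ 2) α :=
      h1.div hDα' hDα
    have h3 : HasDerivAt (fun z => z - (z - α) * N z / D z)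
        (1 - ((1 * N α + (α - α) * deriv N α) * D α - (α - α) * N α * deriv D α) / D α ^ 2) α :=
      (hasDerivAt_id α).sub h2
    rw [h3.deriv]
    field_simp
    ring

lemma part_one (α : ℂ) (hre : α.re ≤ 0) (m : ℕ) (hm : 1 ≤ m) (h : ℂ → ℂ) (U : Set ℂ)
    (hU : IsOpen U) (hαU : α ∈ U) (hh : DifferentiableOn ℂ h U) (hhα : h α ≠ 0)
    (hζ : ∀ z ∈ U, riemannZeta z = (z - α) ^ m * h z) :
    ∃ (F : ℂ → ℂ) (V : Set ℂ), IsOpen V ∧ α ∈ V ∧ DifferentiableOn ℂ F V ∧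
      (∀ z ∈ V, z ≠ α → F z = nuZeta z) ∧
      F α = α ∧ deriv F α = 1 - 1 / (m * α) ∧ 1 < ‖deriv F α‖ := by
  have hm0 : (m : ℂ) ≠ 0 := Nat.cast_ne_zero.2 (by omega)
  have hα0 : α ≠ 0 := by
    intro h0
    have := hζ α hαU
    rw [sub_self, zero_pow (by omega), zero_mul, h0] at this
    rw [riemannZeta_zero] at this
    norm_num at this
  -- h is analytic, so deriv h is differentiable on U
  have han : AnalyticOnNhd ℂ h U := hh.analyticOnNhd hU
  have hdh : DifferentiableOn ℂ (deriv h) U := (han.deriv).differentiableOn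
  set D : ℂ → ℂ := fun z => z * ((m : ℂ) * h z + (z - α) * deriv h z) with hDdef
  have hDdiff : DifferentiableOn ℂ D U :=
    differentiableOn_id.mul (((differentiableOn_const _).mul hh).add
      ((differentiableOn_id.sub_const α).mul hdh))
  have hDα : D α ≠ 0 := by
    simp only [hDdef, sub_self, zero_mul, add_zero]
    exact mul_ne_zero hα0 (mul_ne_zero hm0 hhα)
  obtain ⟨V, hVopen, hαV, hVU, hVD, hFdiff, hFα, hFderiv⟩ :=
    aux_main h D U α hU hαU hh hDdiff hDα
  have hNDα : h α / D α = 1 / ((m : ℂ) * α) := by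
    simp only [hDdef, sub_self, zero_mul, add_zero]
    field_simp
  refine ⟨_, V, hVopen, hαV, hFdiff, ?_, hFα, ?_, ?_⟩
  · -- agreement with nuZeta
    intro z hzV hzα
    have hzU : z ∈ U := hVU hzV
    have hzD : D z ≠ 0 := hVD z hzV
    have hz0 : z ≠ 0 := by
      intro h0; apply hzD; rw [hDdef]; simp [h0]
    have hzαs : z - α ≠ 0 := sub_ne_zero.2 hzα
    -- compute deriv riemannZeta z
    have ev : riemannZeta =ᶠ[nhds z] fun w => (w - α) ^ m * h w := by
      filter_upwards [hU.mem_nhds hzU] with w hw using hζ w hw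
    have hhz : HasDerivAt h (deriv h z) z := (hh.differentiableAt (hU.mem_nhds hzU)).hasDerivAt
    have hp : HasDerivAt (fun w => (w - α) ^ m * h w)
        ((m : ℂ) * (z - α) ^ (m - 1) * 1 * h z + (z - α) ^ m * deriv h z) z :=
      (((hasDerivAt_id z).sub_const α).pow m).mul hhz
    have hdz : deriv riemannZeta z
        = (m : ℂ) * (z - α) ^ (m - 1) * 1 * h z + (z - α) ^ m * deriv h z := by
      rw [ev.deriv_eq, hp.deriv]
    have hpow : (z - α) ^ m = (z - α) ^ (m - 1) * (z - α) := by
      conv_lhs => rw [show m = (m - 1) + 1 by omega]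
      rw [pow_succ]
    have hpowne : (z - α) ^ (m - 1) ≠ 0 := pow_ne_zero _ hzαs
    have hBne : (m : ℂ) * h z + (z - α) * deriv h z ≠ 0 := by
      intro hB; apply hzD; rw [hDdef]; simp [hB]
    have hζ' : deriv riemannZeta z
        = (z - α) ^ (m - 1) * ((m : ℂ) * h z + (z - α) * deriv h z) := by
      rw [hdz, hpow]; ring
    show z - (z - α) * h z / D z = nuZeta z
    rw [nuZeta, hζ z hzU, hζ', hpow, hDdef]
    congr 1
    have e1 : (z - α) ^ (m - 1) * (z - α) * h z
        / (z * ((z - α) ^ (m - 1) * ((m : ℂ) * h z + (z - α) * deriv h z)))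
        = ((z - α) ^ (m - 1) * ((z - α) * h z))
        / ((z - α) ^ (m - 1) * (z * ((m : ℂ) * h z + (z - α) * deriv h z))) := by
      ring_nf
    rw [e1, mul_div_mul_left _ _ hpowne]
  · rw [hFderiv, hNDα]
  · rw [hFderiv, hNDα]
    apply one_lt_abs_one_sub
    · rw [one_div]; exact inv_ne_zero (mul_ne_zero hm0 hα0)
    · rw [one_div, Complex.inv_re]
      apply div_nonpos_of_nonpos_of_nonneg
      · have : ((m : ℂ) * α).re = m * α.re := by
          simp [Complex.mul_re]
        rw [this]
        exact mul_nonpos_of_nonneg_of_nonpos (Nat.cast_nonneg m) hre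
      · exact Complex.normSq_nonneg _

lemma part_two :
    ∃ (F : ℂ → ℂ) (V : Set ℂ), IsOpen V ∧ (1 : ℂ) ∈ V ∧ DifferentiableOn ℂ F V ∧
      (∀ z ∈ V, z ≠ 1 → F z = nuZeta z) ∧
      F 1 = 1 ∧ deriv F 1 = 2 ∧ 1 < ‖deriv F 1‖ := by
  obtain ⟨L, hL⟩ : ∃ L : ℂ, Tendsto (fun s : ℂ => riemannZeta s - 1 / (s - 1)) (nhdsWithin 1 {(1:ℂ)}ᶜ) (nhds L) :=
    ⟨_, tendsto_riemannZeta_sub_one_div⟩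
  set φ : ℂ → ℂ := Function.update (fun s : ℂ => riemannZeta s - 1 / (s - 1)) 1 L with hφdef
  have hφne : ∀ z : ℂ, z ≠ 1 → φ z = riemannZeta z - 1 / (z - 1) := fun z hz =>
    Function.update_of_ne hz _ _
  have hφ1 : φ 1 = L := Function.update_self _ _ _
  have hφdiffne : ∀ z : ℂ, z ≠ 1 → DifferentiableAt ℂ φ z := by
    intro z hz
    have hev : (fun s : ℂ => riemannZeta s - 1 / (s - 1)) =ᶠ[nhds z] φ := by
      filter_upwards [isOpen_compl_singleton.mem_nhds (by simpa using hz)] with w hw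
      exact (hφne w (by simpa using hw)).symm
    exact ((differentiableAt_riemannZeta hz).sub
      ((differentiableAt_const 1).div (differentiableAt_id.sub_const 1)
        (sub_ne_zero.2 hz))).congr_of_eventuallyEq hev.symm
  have hφan : AnalyticAt ℂ φ 1 := by
    apply Complex.analyticAt_of_differentiable_on_punctured_nhds_of_continuousAt
    · filter_upwards [self_mem_nhdsWithin] with z hz using hφdiffne z hz
    · rw [← continuousWithinAt_compl_self]
      unfold ContinuousWithinAt
      rw [hφ1]
      apply hL.congr'
      filter_upwards [self_mem_nhdsWithin] with z hz using (hφne z hz).symm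
  have hφdiff : Differentiable ℂ φ := by
    intro z
    by_cases hz : z = 1
    · subst hz; exact hφan.differentiableAt
    · exact hφdiffne z hz
  have hφan' : AnalyticOnNhd ℂ φ univ := hφdiff.differentiableOn.analyticOnNhd isOpen_univ
  have hdφdiff : Differentiable ℂ (deriv φ) := fun z =>
    ((hφan'.deriv z (mem_univ z)).differentiableAt)
  set N : ℂ → ℂ := fun z => 1 + (z - 1) * φ z with hNdef
  set D : ℂ → ℂ := fun z => z * ((z - 1) ^ 2 * deriv φ z - 1) with hDdef
  have hNdiff : DifferentiableOn ℂ N univ :=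
    (differentiableOn_const _).add ((differentiableOn_id.sub_const 1).mul hφdiff.differentiableOn)
  have hDdiff : DifferentiableOn ℂ D univ :=
    differentiableOn_id.mul ((((differentiableOn_id.sub_const 1).pow 2).mul
      hdφdiff.differentiableOn).sub (differentiableOn_const _))
  have hD1 : D 1 ≠ 0 := by rw [hDdef]; norm_num
  obtain ⟨V, hVopen, h1V, _, hVD, hFdiff, hF1, hFderiv⟩ :=
    aux_main N D univ 1 isOpen_univ (mem_univ _) hNdiff hDdiff hD1
  have hND1 : N 1 / D 1 = -1 := by rw [hNdef, hDdef]; norm_num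
  refine ⟨_, V, hVopen, h1V, hFdiff, ?_, hF1, ?_, ?_⟩
  · intro z hzV hz1
    have hzD : D z ≠ 0 := hVD z hzV
    have hz0 : z ≠ 0 := by intro h0; apply hzD; simp [hDdef, h0]
    have hzs : z - 1 ≠ 0 := sub_ne_zero.2 hz1
    have hev : riemannZeta =ᶠ[nhds z] fun w => φ w + (w - 1)⁻¹ := by
      filter_upwards [isOpen_compl_singleton.mem_nhds (by simpa using hz1)] with w hw
      rw [hφne w (by simpa using hw)]; field_simp; ring
    have hinv : HasDerivAt (fun w : ℂ => (w - 1)⁻¹) (-1 / (z - 1) ^ 2) z :=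
      ((hasDerivAt_id z).sub_const 1).inv hzs
    have hsum : HasDerivAt (fun w => φ w + (w - 1)⁻¹) (deriv φ z + -1 / (z - 1) ^ 2) z :=
      (hφdiff z).hasDerivAt.add hinv
    have hζz : riemannZeta z = N z / (z - 1) := by
      simp only [hNdef]
      rw [hφne z hz1]
      field_simp
      ring
    have hdζ : deriv riemannZeta z = ((z - 1) ^ 2 * deriv φ z - 1) / (z - 1) ^ 2 := by
      rw [hev.deriv_eq, hsum.deriv]
      field_simp
      ring
    have hBne : (z - 1) ^ 2 * deriv φ z - 1 ≠ 0 := by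
      intro hB; apply hzD; rw [hDdef]; simp [hB]
    show z - (z - 1) * N z / D z = nuZeta z
    rw [nuZeta, hζz, hdζ]
    simp only [hDdef]
    congr 1
    field_simp
  · rw [hFderiv, hND1]; norm_num
  · rw [hFderiv, hND1]; norm_num

/-- Every fixed point of `ν_ζ` off the critical strip is repelling: (i) at a zero `α` of `ζ`
of order `m ≥ 1` with `Re α ≤ 0`, the holomorphic extension `F` of `ν_ζ` satisfies
`F α = α`, `F' α = 1 - 1/(mα)` and `|F' α| > 1`; (ii) at the pole `z = 1` of `ζ`, the
holomorphic extension `F` of `ν_ζ` satisfies `F 1 = 1` and `F' 1 = 2`, so `|F' 1| > 1`. -/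
theorem nuZeta_repelling_off_critical_strip :
    (∀ (α : ℂ), α.re ≤ 0 → ∀ (m : ℕ), 1 ≤ m → ∀ (h : ℂ → ℂ) (U : Set ℂ),
      IsOpen U → α ∈ U → DifferentiableOn ℂ h U → h α ≠ 0 →
      (∀ z ∈ U, riemannZeta z = (z - α) ^ m * h z) →
      ∃ (F : ℂ → ℂ) (V : Set ℂ), IsOpen V ∧ α ∈ V ∧ DifferentiableOn ℂ F V ∧
        (∀ z ∈ V, z ≠ α → F z = nuZeta z) ∧
        F α = α ∧ deriv F α = 1 - 1 / (m * α) ∧ 1 < ‖deriv F α‖) ∧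
    (∃ (F : ℂ → ℂ) (V : Set ℂ), IsOpen V ∧ (1 : ℂ) ∈ V ∧ DifferentiableOn ℂ F V ∧
      (∀ z ∈ V, z ≠ 1 → F z = nuZeta z) ∧
      F 1 = 1 ∧ deriv F 1 = 2 ∧ 1 < ‖deriv F 1‖) := by
  exact ⟨fun α hre m hm h U hU hαU hh hhα hζ => part_one α hre m hm h U hU hαU hh hhα hζ,
    part_two⟩
end

section
/- Assume the Riemann hypothesis. If α lies in the critical strip S, ζ(α) = 0, and ζ'(α) ≠ 0 (i.e. α is a simple zero), then α is an indifferent fixed point of ν_ζ whose multiplier is not 1: ν_ζ(α) = α, |ν_ζ'(α)| = 1, and ν_ζ'(α) ≠ 1. -/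
open Complex

lemma analyticAt_zeta {z : ℂ} (hz : z ≠ 1) : AnalyticAt ℂ riemannZeta z := by
  have hopen : IsOpen ({1}ᶜ : Set ℂ) := isOpen_compl_singleton
  exact DifferentiableOn.analyticAt
    (fun w hw => (differentiableAt_riemannZeta hw).differentiableWithinAt)
    (hopen.mem_nhds hz)

lemma diff_deriv_zeta {z : ℂ} (hz : z ≠ 1) :
    DifferentiableAt ℂ (deriv riemannZeta) z := by
  have h1 : AnalyticAt ℂ (fderiv ℂ riemannZeta) z := (analyticAt_zeta hz).fderiv
  have h2 : DifferentiableAt ℂ (fun w => fderiv ℂ riemannZeta w 1) z :=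
    h1.differentiableAt.clm_apply (differentiableAt_const _)
  exact h2.congr_of_eventuallyEq (Filter.Eventually.of_forall fun w => rfl)

/-- Under the Riemann hypothesis, every simple zero of `ζ` in the critical strip is an
indifferent fixed point of `ν_ζ` whose multiplier is not `1`. -/
theorem simple_zero_indifferent_of_RH
    (RH : ∀ s : ℂ, 0 < s.re → s.re < 1 → riemannZeta s = 0 → s.re = 1 / 2)
    (α : ℂ) (hα₀ : 0 < α.re) (hα₁ : α.re < 1)
    (hzero : riemannZeta α = 0) (hsimple : deriv riemannZeta α ≠ 0) :
    nuZeta α = α ∧ ‖deriv nuZeta α‖ = 1 ∧ deriv nuZeta α ≠ 1 := by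
  have hne1 : α ≠ 1 := by intro h; rw [h] at hα₁; simp at hα₁
  have hα0 : α ≠ 0 := by intro h; rw [h] at hα₀; simp at hα₀
  have hre : α.re = 1 / 2 := RH α hα₀ hα₁ hzero
  -- compute the derivative of nuZeta at α
  have hf : HasDerivAt riemannZeta (deriv riemannZeta α) α :=
    (differentiableAt_riemannZeta hne1).hasDerivAt
  have hg : HasDerivAt (fun z => z * deriv riemannZeta z)
      (1 * deriv riemannZeta α + α * deriv (deriv riemannZeta) α) α :=
    (hasDerivAt_id α).mul (diff_deriv_zeta hne1).hasDerivAt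
  have hgα : α * deriv riemannZeta α ≠ 0 := mul_ne_zero hα0 hsimple
  have hq := hf.div hg hgα
  have hν : HasDerivAt nuZeta (1 - (deriv riemannZeta α * (α * deriv riemannZeta α) -
      riemannZeta α * (1 * deriv riemannZeta α + α * deriv (deriv riemannZeta) α)) /
      (α * deriv riemannZeta α) ^ 2) α := (hasDerivAt_id α).sub hq
  have hval : deriv nuZeta α = 1 - 1 / α := by
    rw [hν.deriv, hzero]
    field_simp
    ring
  refine ⟨by simp [nuZeta, hzero], ?_, ?_⟩
  · rw [hval]
    have h1 : (1 : ℂ) - 1 / α = (α - 1) / α := by field_simp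
    rw [h1, norm_div]
    have hns : Complex.normSq (α - 1) = Complex.normSq α := by
      simp only [Complex.normSq_apply, Complex.sub_re, Complex.sub_im,
        Complex.one_re, Complex.one_im, hre]
      ring
    have habs : ‖α - 1‖ = ‖α‖ := by
      rw [Complex.norm_def, Complex.norm_def, hns]
    rw [habs, div_self (by simpa using hα0)]
  · rw [hval]
    intro h
    have : (1 : ℂ) / α = 0 := by linear_combination -h
    simp [hα0] at this
end

section
/- Assume the Riemann hypothesis. If α in the critical strip S is a zero of ζ of order m ≥ 2, then the holomorphic extension F of ν_ζ(z) = z − ζ(z)/(z ζ'(z)) at α satisfies F(α) = α, F'(α) = 1 − 1/(mα), |F'(α) − 1/2| ≤ 1/2, and |F'(α)| < 1; that is, α is an attracting fixed point of ν_ζ. -/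
open Complex

/-- Under the Riemann hypothesis, a zero of `ζ` in the critical strip of order `m ≥ 2`
is an attracting fixed point of (the holomorphic extension of) `ν_ζ`, with multiplier
`λ = 1 - 1/(mα)` satisfying `|λ - 1/2| ≤ 1/2` and `|λ| < 1`. -/
theorem multiple_zero_attracting_of_RH
    (RH : ∀ s : ℂ, 0 < s.re → s.re < 1 → riemannZeta s = 0 → s.re = 1 / 2)
    (α : ℂ) (hα₀ : 0 < α.re) (hα₁ : α.re < 1) (m : ℕ) (hm : 2 ≤ m)
    (h : ℂ → ℂ) (U : Set ℂ) (hU : IsOpen U) (hαU : α ∈ U)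
    (hh : DifferentiableOn ℂ h U) (hhα : h α ≠ 0)
    (hfact : ∀ z ∈ U, riemannZeta z = (z - α) ^ m * h z) :
    ∃ (F : ℂ → ℂ) (V : Set ℂ), IsOpen V ∧ α ∈ V ∧ DifferentiableOn ℂ F V ∧
      (∀ z ∈ V, z ≠ α → F z = nuZeta z) ∧
      F α = α ∧ deriv F α = 1 - 1 / (m * α) ∧
      ‖deriv F α - 1 / 2‖ ≤ 1 / 2 ∧ ‖deriv F α‖ < 1 := by
  have hα0 : α ≠ 0 := by
    intro h0; rw [h0] at hα₀; simp at hα₀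
  have hm0 : (m : ℂ) ≠ 0 := Nat.cast_ne_zero.mpr (by omega)
  have hmα : (m : ℂ) * α ≠ 0 := mul_ne_zero hm0 hα0
  -- `deriv h` is differentiable on `U`
  have hh' : DifferentiableOn ℂ (deriv h) U := ((hh.analyticOnNhd hU).deriv).differentiableOn
  set D : ℂ → ℂ := fun z => z * ((m : ℂ) * h z + (z - α) * deriv h z) with hDdef
  have hDdiff : DifferentiableOn ℂ D U := by
    exact differentiableOn_id.mul
      (((differentiableOn_const _).mul hh).add
        ((differentiableOn_id.sub (differentiableOn_const _)).mul hh'))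
  have hDα : D α = α * ((m : ℂ) * h α) := by simp [hDdef]
  have hDα0 : D α ≠ 0 := by
    rw [hDα]; exact mul_ne_zero hα0 (mul_ne_zero hm0 hhα)
  set V : Set ℂ := U ∩ D ⁻¹' {0}ᶜ with hVdef
  have hVopen : IsOpen V :=
    (hDdiff.continuousOn).isOpen_inter_preimage hU isOpen_compl_singleton
  have hαV : α ∈ V := ⟨hαU, by simp [hDα0]⟩
  have hVne : ∀ z ∈ V, D z ≠ 0 := fun z hz => hz.2
  set F : ℂ → ℂ := fun z => z - (z - α) * h z / D z with hFdef
  have hFdiff : DifferentiableOn ℂ F V := by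
    refine differentiableOn_id.sub ?_
    exact (((differentiableOn_id.sub (differentiableOn_const _)).mul
      (hh.mono Set.inter_subset_left)).div
      (hDdiff.mono Set.inter_subset_left) hVne)
  -- the derivative of F at α
  have hd : deriv F α = 1 - 1 / ((m : ℂ) * α) := by
    have hhα' : DifferentiableAt ℂ h α := hh.differentiableAt (hU.mem_nhds hαU)
    have hDα' : DifferentiableAt ℂ D α := hDdiff.differentiableAt (hU.mem_nhds hαU)
    have hN : HasDerivAt (fun z : ℂ => (z - α) * h z) (1 * h α + (α - α) * deriv h α) α :=
      ((hasDerivAt_id α).sub_const α).mul hhα'.hasDerivAt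
    have hQ : HasDerivAt (fun z : ℂ => (z - α) * h z / D z)
        (((1 * h α + (α - α) * deriv h α) * D α - (α - α) * h α * deriv D α) / D α ^ 2) α :=
      hN.div hDα'.hasDerivAt hDα0
    have hF : HasDerivAt F
        (1 - ((1 * h α + (α - α) * deriv h α) * D α - (α - α) * h α * deriv D α) / D α ^ 2) α :=
      (hasDerivAt_id α).sub hQ
    rw [hF.deriv, hDα]
    field_simp
    ring
  -- Riemann hypothesis gives Re α = 1/2
  have hre : α.re = 1 / 2 := by
    apply RH α hα₀ hα₁
    rw [hfact α hαU]
    simp [zero_pow (show m ≠ 0 by omega)]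
  have hmR : (2 : ℝ) ≤ (m : ℝ) := by exact_mod_cast hm
  have hcre : ((m : ℂ) * α).re = (m : ℝ) * α.re := by simp [Complex.mul_re]
  have hcim : ((m : ℂ) * α).im = (m : ℝ) * α.im := by simp [Complex.mul_im]
  have habsc : 0 < ‖(m : ℂ) * α‖ := by
    simpa using norm_pos_iff.mpr hmα
  refine ⟨F, V, hVopen, hαV, hFdiff, ?_, ?_, hd, ?_, ?_⟩
  · -- F = nuZeta away from α
    intro z hz hzα
    have hzU : z ∈ U := hz.1
    have hhz : DifferentiableAt ℂ h z := hh.differentiableAt (hU.mem_nhds hzU)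
    have hζ' : deriv riemannZeta z
        = (m : ℂ) * (z - α) ^ (m - 1) * h z + (z - α) ^ m * deriv h z := by
      have heq : riemannZeta =ᶠ[nhds z] fun w => (w - α) ^ m * h w :=
        Filter.eventuallyEq_of_mem (hU.mem_nhds hzU) hfact
      rw [heq.deriv_eq]
      have d1 : HasDerivAt (fun w : ℂ => (w - α) ^ m)
          ((m : ℂ) * (z - α) ^ (m - 1) * 1) z :=
        ((hasDerivAt_id z).sub_const α).pow m
      rw [(d1.fun_mul hhz.hasDerivAt).deriv]
      ring
    obtain ⟨k, rfl⟩ : ∃ k, m = k + 2 := ⟨m - 2, by omega⟩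
    have hzα' : z - α ≠ 0 := sub_ne_zero.mpr hzα
    have key : z * deriv riemannZeta z = (z - α) ^ (k + 1) * D z := by
      rw [hζ']
      simp only [hDdef, show k + 2 - 1 = k + 1 from rfl]
      ring
    have : riemannZeta z / (z * deriv riemannZeta z) = (z - α) * h z / D z := by
      rw [key, hfact z hzU]
      rw [show (z - α) ^ (k + 2) * h z = (z - α) ^ (k + 1) * ((z - α) * h z) by ring]
      exact mul_div_mul_left _ _ (pow_ne_zero _ hzα')
    simp only [nuZeta, hFdef, this]
  · simp [hFdef]
  · -- |λ - 1/2| ≤ 1/2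
    rw [hd]
    have heq : (1 : ℂ) - 1 / ((m : ℂ) * α) - 1 / 2
        = ((m : ℂ) * α - 2) / (2 * ((m : ℂ) * α)) := by
      field_simp; ring
    rw [heq, norm_div, norm_mul]
    rw [div_le_iff₀ (by rw [Complex.norm_two]; linarith)]
    have hle : ‖(m : ℂ) * α - 2‖ ≤ ‖(m : ℂ) * α‖ := by
      rw [Complex.norm_def, Complex.norm_def]
      apply Real.sqrt_le_sqrt
      simp only [Complex.normSq_apply, Complex.sub_re, Complex.sub_im, hcre, hcim]
      simp only [hre]
      norm_num
      nlinarith [sq_nonneg ((m : ℝ) * α.im)]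
    calc ‖(m : ℂ) * α - 2‖ ≤ ‖(m : ℂ) * α‖ := hle
      _ = 1 / 2 * (‖(2 : ℂ)‖ * ‖(m : ℂ) * α‖) := by
          rw [Complex.norm_two]; ring
  · -- |λ| < 1
    rw [hd]
    have heq : (1 : ℂ) - 1 / ((m : ℂ) * α)
        = ((m : ℂ) * α - 1) / ((m : ℂ) * α) := by
      field_simp
    rw [heq, norm_div, div_lt_one habsc]
    rw [Complex.norm_def, Complex.norm_def]
    apply Real.sqrt_lt_sqrt (Complex.normSq_nonneg _)
    simp only [Complex.normSq_apply, Complex.sub_re, Complex.sub_im, hcre, hcim]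
    simp only [hre]
    norm_num
    nlinarith [sq_nonneg ((m : ℝ) * α.im)]
end

section
/- Suppose that for every zero α of ζ in the critical strip S, with order m (ζ(z) = (z−α)^m h(z), h(α) ≠ 0), one has |1 − 1/(mα)| = 1 (i.e. every fixed point of ν_ζ in S is indifferent). Then the Riemann hypothesis and the simplicity hypothesis hold: every zero of ζ in S satisfies Re α = 1/2 and has order m = 1. -/
open Complex

lemma zeta_analyticOnNhd : AnalyticOnNhd ℂ riemannZeta {(1:ℂ)}ᶜ :=
  DifferentiableOn.analyticOnNhd
    (fun z hz => (differentiableAt_riemannZeta hz).differentiableWithinAt)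
    isOpen_compl_singleton

/-- Existence of an order/factorization at a nontrivial zero. -/
lemma exists_factorization {α : ℂ} (hα : α ≠ 1) (h0 : riemannZeta α = 0) :
    ∃ (m : ℕ) (h : ℂ → ℂ) (U : Set ℂ), 1 ≤ m ∧ IsOpen U ∧ α ∈ U ∧
      DifferentiableOn ℂ h U ∧ h α ≠ 0 ∧ ∀ z ∈ U, riemannZeta z = (z - α) ^ m * h z := by
  have hA : AnalyticAt ℂ riemannZeta α := zeta_analyticOnNhd α hα
  have htop : analyticOrderAt riemannZeta α ≠ ⊤ := by
    intro htop
    have hev : ∀ᶠ z in nhds α, riemannZeta z = 0 := analyticOrderAt_eq_top.mp htop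
    have h2 : riemannZeta 2 = 0 := by
      have := zeta_analyticOnNhd.eqOn_zero_of_preconnected_of_eventuallyEq_zero
        (isConnected_compl_singleton_of_one_lt_rank (by simp) (1:ℂ)).isPreconnected
        (z₀ := α) hα hev
      exact this (by norm_num : (2:ℂ) ∈ ({(1:ℂ)}ᶜ : Set ℂ))
    rw [riemannZeta_two] at h2
    have hpi : (Real.pi : ℂ) ≠ 0 := ofReal_ne_zero.mpr Real.pi_ne_zero
    field_simp at h2
    exact hpi (pow_eq_zero_iff two_ne_zero |>.mp (by simpa using h2))
  obtain ⟨m, hm⟩ := WithTop.ne_top_iff_exists.mp htop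
  obtain ⟨g, hg, hgα, hev⟩ := hA.analyticOrderAt_eq_natCast |>.mp hm.symm
  have hm1 : 1 ≤ m := by
    rcases Nat.eq_zero_or_pos m with h | h
    · exfalso
      subst h
      have := hev.self_of_nhds
      simp [h0] at this
      exact hgα this.symm
    · exact h
  have hgev : ∀ᶠ z in nhds α, AnalyticAt ℂ g z := hg.eventually_analyticAt
  obtain ⟨U, hUsub, hUopen, hαU⟩ := mem_nhds_iff.mp (hgev.and hev)
  refine ⟨m, g, U, hm1, hUopen, hαU, ?_, hgα, ?_⟩
  · exact fun z hz => ((hUsub hz).1).differentiableAt.differentiableWithinAt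
  · intro z hz
    simpa [smul_eq_mul] using (hUsub hz).2

lemma re_eq_half_of_abs {w : ℂ} (hw : w ≠ 0) (h : ‖1 - 1 / w‖ = 1) :
    w.re = 1 / 2 := by
  have h1 : (1 : ℂ) - 1 / w = (w - 1) / w := by field_simp
  rw [h1, norm_div] at h
  have hw' : ‖w‖ ≠ 0 := by simpa using hw
  have habs : ‖w - 1‖ = ‖w‖ := by
    field_simp at h; linarith [h]
  have hsq : Complex.normSq (w - 1) = Complex.normSq w := by
    have := congrArg (· ^ 2) habs
    simpa [Complex.sq_norm] using this
  simp only [Complex.normSq_apply, Complex.sub_re, Complex.sub_im, Complex.one_re,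
    Complex.one_im] at hsq
  nlinarith

/-- If every fixed point of `ν_ζ` in the critical strip is indifferent (i.e. every zero
`α` of `ζ` in the strip, of order `m`, satisfies `|1 - 1/(mα)| = 1`), then the Riemann
hypothesis and the simplicity hypothesis hold: every zero of `ζ` in the strip has real
part `1/2` and order `1`. -/
theorem RH_and_simplicity_of_indifferent
    (hyp : ∀ (α : ℂ), 0 < α.re → α.re < 1 → ∀ (m : ℕ), 1 ≤ m →
      ∀ (h : ℂ → ℂ) (U : Set ℂ), IsOpen U → α ∈ U → DifferentiableOn ℂ h U → h α ≠ 0 →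
      (∀ z ∈ U, riemannZeta z = (z - α) ^ m * h z) →
      ‖1 - 1 / (m * α)‖ = 1) :
    ∀ (α : ℂ), 0 < α.re → α.re < 1 → riemannZeta α = 0 →
      α.re = 1 / 2 ∧
      ∀ (m : ℕ), 1 ≤ m → ∀ (h : ℂ → ℂ) (U : Set ℂ), IsOpen U → α ∈ U →
        DifferentiableOn ℂ h U → h α ≠ 0 →
        (∀ z ∈ U, riemannZeta z = (z - α) ^ m * h z) → m = 1 := by
  intro α hre0 hre1 hζ
  -- general: from any factorization at a strip zero β with order m, (m:ℝ) * β.re = 1/2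
  have key : ∀ (β : ℂ), 0 < β.re → β.re < 1 → ∀ (m : ℕ), 1 ≤ m →
      ∀ (h : ℂ → ℂ) (U : Set ℂ), IsOpen U → β ∈ U → DifferentiableOn ℂ h U → h β ≠ 0 →
      (∀ z ∈ U, riemannZeta z = (z - β) ^ m * h z) → (m : ℝ) * β.re = 1 / 2 := by
    intro β hb0 hb1 m hm h U hU hβU hd hne hfac
    have habs := hyp β hb0 hb1 m hm h U hU hβU hd hne hfac
    have hβ0 : β ≠ 0 := fun h => by simp [h] at hb0
    have hw : (m : ℂ) * β ≠ 0 :=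
      mul_ne_zero (Nat.cast_ne_zero.mpr (by omega)) hβ0
    have := re_eq_half_of_abs hw habs
    simpa [Complex.mul_re] using this
  have hα1 : α ≠ 1 := fun h => by simp [h] at hre1
  obtain ⟨m, h, U, hm, hUopen, hαU, hd, hne, hfac⟩ := exists_factorization hα1 hζ
  have hαre : (m : ℝ) * α.re = 1 / 2 := key α hre0 hre1 m hm h U hUopen hαU hd hne hfac
  -- symmetric zero β = 1 - α
  set β := 1 - α with hβdef
  have hζβ : riemannZeta β = 0 := by
    rw [hβdef, riemannZeta_one_sub (fun n hn => ?_) hα1, hζ, mul_zero]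
    · have : α.re = -(n : ℝ) := by rw [hn]; simp
      rw [this] at hre0
      have : (0:ℝ) ≤ (n:ℝ) := Nat.cast_nonneg n
      linarith
  have hβre0 : 0 < β.re := by simp [hβdef]; linarith
  have hβre1 : β.re < 1 := by simp [hβdef]; linarith
  have hβ1 : β ≠ 1 := fun h => by rw [h] at hβre1; norm_num at hβre1
  obtain ⟨m', h', U', hm', hU'open, hβU', hd', hne', hfac'⟩ := exists_factorization hβ1 hζβ
  have hβre : (m' : ℝ) * β.re = 1 / 2 := key β hβre0 hβre1 m' hm' h' U' hU'open hβU' hd' hne' hfac'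
  have hβre' : β.re = 1 - α.re := by simp [hβdef]
  -- now m, m' ≥ 1, m * α.re = 1/2, m' * (1 - α.re) = 1/2 forces m = m' = 1, α.re = 1/2
  have hm1r : (1:ℝ) ≤ (m:ℝ) := by exact_mod_cast hm
  have hm'1r : (1:ℝ) ≤ (m':ℝ) := by exact_mod_cast hm'
  rw [hβre'] at hβre
  have hαhalf : α.re = 1 / 2 := by nlinarith
  refine ⟨hαhalf, fun m₂ hm₂ h₂ U₂ hU₂ hαU₂ hd₂ hne₂ hfac₂ => ?_⟩
  have := key α hre0 hre1 m₂ hm₂ h₂ U₂ hU₂ hαU₂ hd₂ hne₂ hfac₂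
  rw [hαhalf] at this
  have : (m₂ : ℝ) = 1 := by linarith
  exact_mod_cast this
end

section
/- Let ξ(z) = (1/2) z (1−z) π^{−z/2} Γ(z/2) ζ(z) be the Riemann xi function (an entire function whose zeros are exactly the zeros of ζ in the critical strip S, with the same orders). The following are equivalent: (a') every zero of ζ in S has real part 1/2 and is simple; (b') every zero α of ξ, of order m, satisfies |1 − 1/(mα)| = 1, i.e. all fixed points of ν_ξ(z) = z − ξ(z)/(z ξ'(z)) are indifferent; (c') every zero α of ξ, of order m, satisfies |1 − 1/(mα)| ≥ 1, i.e. ν_ξ has no attracting fixed point. -/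
open Complex Filter Set Topology

/-- The Riemann xi function: `ξ(z) = (1/2) z (1-z) π^(-z/2) Γ(z/2) ζ(z)`. -/
noncomputable def riemannXi (z : ℂ) : ℂ :=
  (1 / 2) * z * (1 - z) * (Real.pi : ℂ) ^ (-z / 2) * Complex.Gamma (z / 2) * riemannZeta z

/-- The nu function of the Riemann xi function: `ν_ξ(z) = z - ξ(z)/(z ξ'(z))`. -/
noncomputable def nuXi (z : ℂ) : ℂ := z - riemannXi z / (z * deriv riemannXi z)

noncomputable def xiFactor (z : ℂ) : ℂ :=
  (1 / 2) * z * (1 - z) * (Real.pi : ℂ) ^ (-z / 2) * Complex.Gamma (z / 2)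

lemma riemannXi_eq (z : ℂ) : riemannXi z = xiFactor z * riemannZeta z := rfl

lemma xiFactor_eq (z : ℂ) : xiFactor z = (1 / 2) * z * (1 - z) * Gammaℝ z := by
  rw [xiFactor, Gammaℝ_def]; ring

lemma pi_cpow_ne_zero (w : ℂ) : (Real.pi : ℂ) ^ w ≠ 0 := by
  simp [cpow_eq_zero_iff, ofReal_ne_zero, Real.pi_ne_zero]

lemma Gamma_half_ne_zero_iff {z : ℂ} : Complex.Gamma (z / 2) ≠ 0 ↔ Gammaℝ z ≠ 0 := by
  rw [Gammaℝ_def]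
  constructor
  · exact fun h => mul_ne_zero (pi_cpow_ne_zero _) h
  · intro h h'; exact h (by rw [h', mul_zero])

lemma diffAt_Gammaℝ {z : ℂ} (hz : Gammaℝ z ≠ 0) : DifferentiableAt ℂ Gammaℝ z := by
  have hΓ : ∀ m : ℕ, z / 2 ≠ -m := by
    intro m hm
    exact (Gamma_half_ne_zero_iff.mpr hz) (Complex.Gamma_eq_zero_iff _ |>.mpr ⟨m, hm⟩)
  have h1 : DifferentiableAt ℂ (fun z : ℂ => (Real.pi : ℂ) ^ (-z / 2)) z :=
    DifferentiableAt.const_cpow (by fun_prop) (Or.inl (by simp [ofReal_ne_zero, Real.pi_ne_zero]))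
  have h2 : DifferentiableAt ℂ (fun z : ℂ => Complex.Gamma (z / 2)) z :=
    (Complex.differentiableAt_Gamma _ hΓ).comp z (differentiableAt_id.div_const 2)
  exact h1.mul h2

lemma diffAt_xiFactor {z : ℂ} (hz : Gammaℝ z ≠ 0) : DifferentiableAt ℂ xiFactor z := by
  have : DifferentiableAt ℂ (fun z : ℂ => (1 / 2) * z * (1 - z) * Gammaℝ z) z := by
    exact (((differentiableAt_const _).mul differentiableAt_id).mul
      ((differentiableAt_const _).sub differentiableAt_id)).mul (diffAt_Gammaℝ hz)
  exact this.congr_of_eventuallyEq (Filter.Eventually.of_forall fun w => (xiFactor_eq w))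

lemma xiFactor_ne_zero {z : ℂ} (h0 : z ≠ 0) (h1 : z ≠ 1) (hG : Gammaℝ z ≠ 0) :
    xiFactor z ≠ 0 := by
  rw [xiFactor_eq]
  exact mul_ne_zero (mul_ne_zero (mul_ne_zero (by norm_num) h0)
    (sub_ne_zero.mpr (Ne.symm h1))) hG

lemma riemannXi_eq_Lambda {z : ℂ} (hz : Gammaℝ z ≠ 0) :
    riemannXi z = (1 / 2) * z * (1 - z) * completedRiemannZeta z := by
  have hz0 : z ≠ 0 := by
    rintro rfl
    exact hz (Gammaℝ_eq_zero_iff.mpr ⟨0, by simp⟩)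
  rw [riemannXi_eq, xiFactor_eq, riemannZeta_def_of_ne_zero hz0]
  field_simp

lemma zeta_one_sub_zero' {α : ℂ} (hα0 : α ≠ 0) (hα1 : α ≠ 1) (hG : Gammaℝ α ≠ 0)
    (hζ : riemannZeta α = 0) : riemannZeta (1 - α) = 0 := by
  have hΛ : completedRiemannZeta α = 0 := by
    have h := riemannZeta_def_of_ne_zero hα0
    rw [hζ, eq_comm, div_eq_zero_iff] at h
    exact h.resolve_right hG
  have hβ0 : (1 : ℂ) - α ≠ 0 := sub_ne_zero.mpr (Ne.symm hα1)
  rw [riemannZeta_def_of_ne_zero hβ0, completedRiemannZeta_one_sub, hΛ, zero_div]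

lemma abs_indiff {α : ℂ} (h : α.re = 1 / 2) : ‖1 - 1 / α‖ = 1 := by
  have hα : α ≠ 0 := by
    rintro rfl; rw [Complex.zero_re] at h; norm_num at h
  have h2 : 1 - 1 / α = (α - 1) / α := by field_simp
  have habs : ‖α - 1‖ = ‖α‖ := by
    rw [Complex.norm_def, Complex.norm_def]
    congr 1
    simp only [Complex.normSq_apply, Complex.sub_re, Complex.sub_im, Complex.one_re,
      Complex.one_im, h]
    ring
  rw [h2, norm_div, habs, div_self (norm_ne_zero_iff.mpr hα)]

lemma abs_ge_iff {m : ℕ} {α : ℂ} (hm : 1 ≤ m) (hα : α ≠ 0) :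
    1 ≤ ‖1 - 1 / ((m : ℂ) * α)‖ ↔ (m : ℝ) * α.re ≤ 1 / 2 := by
  have hm0 : (m : ℂ) ≠ 0 := Nat.cast_ne_zero.mpr (by omega)
  have hmα : (m : ℂ) * α ≠ 0 := mul_ne_zero hm0 hα
  have h2 : 1 - 1 / ((m : ℂ) * α) = ((m : ℂ) * α - 1) / ((m : ℂ) * α) := by field_simp
  rw [h2, norm_div, one_le_div (norm_pos_iff.mpr hmα), Complex.norm_def, Complex.norm_def,
    Real.sqrt_le_sqrt_iff (Complex.normSq_nonneg _)]
  simp only [Complex.normSq_apply, Complex.mul_re, Complex.mul_im, Complex.natCast_re,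
    Complex.natCast_im, Complex.sub_re, Complex.sub_im, Complex.one_re, Complex.one_im]
  constructor <;> intro h <;> nlinarith

lemma xi_zero_cases {α : ℂ} {m : ℕ} (hm : 1 ≤ m) {h : ℂ → ℂ} {U : Set ℂ}
    (hU : IsOpen U) (hαU : α ∈ U) (hh : DifferentiableOn ℂ h U) (hhα : h α ≠ 0)
    (hfac : ∀ z ∈ U, riemannXi z = (z - α) ^ m * h z) :
    riemannZeta α = 0 ∧ 0 < α.re ∧ α.re < 1 := by
  have hm0 : m ≠ 0 := by omega
  -- ξ tends to 0 in punctured neighborhoods of α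
  have hcont : ContinuousAt h α := (hh.differentiableAt (hU.mem_nhds hαU)).continuousAt
  have hξ0 : Tendsto riemannXi (𝓝[≠] α) (𝓝 0) := by
    have hF : Tendsto (fun z => (z - α) ^ m * h z) (𝓝 α) (𝓝 0) := by
      have hc : ContinuousAt (fun z : ℂ => (z - α) ^ m * h z) α :=
        ContinuousAt.mul (by fun_prop) hcont
      simpa [zero_pow hm0] using hc.tendsto
    have hev : (fun z => (z - α) ^ m * h z) =ᶠ[𝓝[≠] α] riemannXi := by
      filter_upwards [nhdsWithin_le_nhds (hU.eventually_mem hαU)] with z hz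
      exact (hfac z hz).symm
    exact (hF.mono_left nhdsWithin_le_nhds).congr' hev
  have hξα : riemannXi α = 0 := by
    rw [hfac α hαU, sub_self, zero_pow hm0, zero_mul]
  -- rule out α = 0
  have hα0 : α ≠ 0 := by
    rintro rfl
    have h1 : ∀ z : ℂ, riemannXi z = (1 / 2) * (1 - z) * riemannZeta z * (z * Gammaℝ z) := by
      intro z; rw [riemannXi_eq, xiFactor_eq]; ring
    have t1 : Tendsto (fun z : ℂ => (1 / 2) * (1 - z) * riemannZeta z) (𝓝[≠] (0 : ℂ))
        (𝓝 ((1 / 2) * (1 - 0) * riemannZeta 0)) := by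
      refine Tendsto.mono_left ?_ nhdsWithin_le_nhds
      exact ((continuousAt_const.mul (continuousAt_const.sub continuousAt_id)).mul
        (differentiableAt_riemannZeta (by norm_num)).continuousAt).tendsto
    have t2 := t1.mul Complex.Gammaℝ_residue_zero
    have t3 : Tendsto riemannXi (𝓝[≠] (0 : ℂ))
        (𝓝 ((1 / 2) * (1 - 0) * riemannZeta 0 * 2)) := by
      refine t2.congr fun z => (h1 z).symm
    have := tendsto_nhds_unique hξ0 t3
    rw [riemannZeta_zero] at this
    norm_num at this
  -- rule out α = 1
  have hα1 : α ≠ 1 := by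
    rintro rfl
    have h1 : ∀ z : ℂ, riemannXi z = -((1 / 2) * z * Gammaℝ z * ((z - 1) * riemannZeta z)) := by
      intro z; rw [riemannXi_eq, xiFactor_eq]; ring
    have t1 : Tendsto (fun z : ℂ => (1 / 2) * z * Gammaℝ z) (𝓝[≠] (1 : ℂ))
        (𝓝 ((1 / 2) * 1 * Gammaℝ 1)) := by
      refine Tendsto.mono_left ?_ nhdsWithin_le_nhds
      exact ((continuousAt_const.mul continuousAt_id).mul
        (diffAt_Gammaℝ (by rw [Gammaℝ_one]; norm_num)).continuousAt).tendsto
    have t2 := (t1.mul riemannZeta_residue_one).neg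
    have t3 : Tendsto riemannXi (𝓝[≠] (1 : ℂ)) (𝓝 (-((1 / 2) * 1 * Gammaℝ 1 * 1))) :=
      t2.congr fun z => (h1 z).symm
    have := tendsto_nhds_unique hξ0 t3
    rw [Gammaℝ_one] at this
    norm_num at this
  -- rule out Gammaℝ α = 0
  have hG : Gammaℝ α ≠ 0 := by
    intro hG0
    obtain ⟨n, hn⟩ := Gammaℝ_eq_zero_iff.mp hG0
    have hn0 : n ≠ 0 := by
      rintro rfl
      apply hα0
      rw [hn]; norm_num
    have hev : ∀ᶠ z in 𝓝[≠] α, Gammaℝ z ≠ 0 := by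
      filter_upwards [nhdsWithin_le_nhds (Metric.ball_mem_nhds α (by norm_num : (0:ℝ) < 2)),
        self_mem_nhdsWithin] with z hz1 hz2
      intro hz0
      obtain ⟨k, hk⟩ := Gammaℝ_eq_zero_iff.mp hz0
      have hkn : k ≠ n := by
        rintro rfl
        exact hz2 (show z = α from hk.trans hn.symm)
      have hzα : z - α = ((2*(n:ℝ) - 2*(k:ℝ) : ℝ) : ℂ) := by
        rw [hk, hn]; push_cast; ring
      have hd : dist z α = |2*(n:ℝ) - 2*(k:ℝ)| := by
        rw [Complex.dist_eq, hzα, Complex.norm_real, Real.norm_eq_abs]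
      have h1 : (1:ℤ) ≤ |(n:ℤ) - (k:ℤ)| :=
        Int.one_le_abs (sub_ne_zero.mpr (by exact_mod_cast (Ne.symm hkn)))
      have h2 : (1:ℝ) ≤ |(n:ℝ) - (k:ℝ)| := by exact_mod_cast h1
      have h3 : (2:ℝ) ≤ |2*(n:ℝ) - 2*(k:ℝ)| := by
        have : |2*(n:ℝ) - 2*(k:ℝ)| = 2 * |(n:ℝ) - (k:ℝ)| := by
          rw [show 2*(n:ℝ) - 2*(k:ℝ) = 2*((n:ℝ)-(k:ℝ)) by ring, abs_mul]; norm_num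
        rw [this]; linarith
      have := Metric.mem_ball.mp hz1
      rw [hd] at this; linarith
    have heq : (fun z : ℂ => (1/2) * z * (1-z) * completedRiemannZeta z) =ᶠ[𝓝[≠] α]
        riemannXi := by
      filter_upwards [hev] with z hz
      exact (riemannXi_eq_Lambda hz).symm
    have hcont2 : Tendsto (fun z : ℂ => (1/2)*z*(1-z)*completedRiemannZeta z) (𝓝 α)
        (𝓝 ((1/2)*α*(1-α)*completedRiemannZeta α)) := by
      have hd : DifferentiableAt ℂ completedRiemannZeta α := differentiableAt_completedZeta hα0 hα1
      exact (ContinuousAt.mul (by fun_prop) hd.continuousAt).tendsto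
    have t3 : Tendsto riemannXi (𝓝[≠] α) (𝓝 ((1/2)*α*(1-α)*completedRiemannZeta α)) :=
      (hcont2.mono_left nhdsWithin_le_nhds).congr' heq
    have hzero := tendsto_nhds_unique hξ0 t3
    have hΛ : completedRiemannZeta α ≠ 0 := by
      intro hΛ0
      have hβ0 : (1:ℂ) - α ≠ 0 := sub_ne_zero.mpr (Ne.symm hα1)
      have hζβ : riemannZeta (1 - α) = 0 := by
        rw [riemannZeta_def_of_ne_zero hβ0, completedRiemannZeta_one_sub, hΛ0, zero_div]
      have hre : 1 ≤ ((1:ℂ) - α).re := by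
        rw [hn]
        simp
      exact riemannZeta_ne_zero_of_one_le_re hre hζβ
    have : (1/2:ℂ)*α*(1-α)*completedRiemannZeta α ≠ 0 :=
      mul_ne_zero (mul_ne_zero (mul_ne_zero (by norm_num) hα0)
        (sub_ne_zero.mpr (Ne.symm hα1))) hΛ
    exact this hzero.symm
  have hζ : riemannZeta α = 0 := by
    have h' := hξα
    rw [riemannXi_eq] at h'
    rcases mul_eq_zero.mp h' with h'' | h''
    · exact absurd h'' (xiFactor_ne_zero hα0 hα1 hG)
    · exact h''
  refine ⟨hζ, ?_, ?_⟩
  · by_contra hre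
    push_neg at hre
    have hζβ := zeta_one_sub_zero' hα0 hα1 hG hζ
    have hre' : (1:ℝ) ≤ ((1:ℂ) - α).re := by
      simp only [Complex.sub_re, Complex.one_re]; linarith
    exact riemannZeta_ne_zero_of_one_le_re hre' hζβ
  · by_contra hre
    push_neg at hre
    exact riemannZeta_ne_zero_of_one_le_re hre hζ

lemma forward_dir
    (ha : ∀ (α : ℂ), 0 < α.re → α.re < 1 → riemannZeta α = 0 →
        α.re = 1 / 2 ∧ deriv riemannZeta α ≠ 0) :
    ∀ (α : ℂ) (m : ℕ), 1 ≤ m →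
      ∀ (h : ℂ → ℂ) (U : Set ℂ), IsOpen U → α ∈ U → DifferentiableOn ℂ h U → h α ≠ 0 →
      (∀ z ∈ U, riemannXi z = (z - α) ^ m * h z) →
      ‖1 - 1 / (m * α)‖ = 1 := by
  intro α m hm h U hU hαU hh hhα hfac
  obtain ⟨hζ, h0, h1⟩ := xi_zero_cases hm hU hαU hh hhα hfac
  obtain ⟨hre, hder⟩ := ha α h0 h1 hζ
  have hα0 : α ≠ 0 := fun hc => by rw [hc] at h0; simp at h0
  have hα1 : α ≠ 1 := fun hc => by rw [hc] at h1; simp at h1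
  have hG : Gammaℝ α ≠ 0 := Gammaℝ_ne_zero_of_re_pos h0
  have hm1 : m = 1 := by
    by_contra hm'
    have hev : riemannXi =ᶠ[𝓝 α] (fun z => (z - α)^m * h z) := by
      filter_upwards [hU.eventually_mem hαU] with z hz using hfac z hz
    have hD : HasDerivAt (fun z => (z - α)^m * h z)
        ((↑m * (α - α)^(m-1) * 1) * h α + (α - α)^m * deriv h α) α := by
      have h1d : HasDerivAt (fun z : ℂ => (z - α)^m) (↑m * (α - α)^(m-1) * 1) α :=
        ((hasDerivAt_id α).sub_const α).pow m
      have h2d : HasDerivAt h (deriv h α) α := (hh.differentiableAt (hU.mem_nhds hαU)).hasDerivAt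
      exact h1d.mul h2d
    have hder0 : deriv riemannXi α = 0 := by
      rw [hev.deriv_eq, hD.deriv]
      simp [sub_self, zero_pow (show m ≠ 0 by omega), zero_pow (show m - 1 ≠ 0 by omega)]
    have hdiffζ : DifferentiableAt ℂ riemannZeta α := differentiableAt_riemannZeta hα1
    have hXieq : riemannXi = fun z => xiFactor z * riemannZeta z := rfl
    have hprod : deriv riemannXi α
        = deriv xiFactor α * riemannZeta α + xiFactor α * deriv riemannZeta α := by
      rw [hXieq, deriv_fun_mul (diffAt_xiFactor hG) hdiffζ]
    rw [hζ, mul_zero, zero_add, hder0] at hprod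
    exact mul_ne_zero (xiFactor_ne_zero hα0 hα1 hG) hder hprod.symm
  subst hm1
  simpa using abs_indiff hre

lemma backward_step
    (H : ∀ (α : ℂ) (m : ℕ), 1 ≤ m →
        ∀ (h : ℂ → ℂ) (U : Set ℂ), IsOpen U → α ∈ U → DifferentiableOn ℂ h U → h α ≠ 0 →
        (∀ z ∈ U, riemannXi z = (z - α) ^ m * h z) →
        1 ≤ ‖1 - 1 / (m * α)‖)
    {α : ℂ} (h0 : 0 < α.re) (h1 : α.re < 1) (hζ : riemannZeta α = 0) :
    ∃ (m : ℕ) (g : ℂ → ℂ), 1 ≤ m ∧ (m : ℝ) * α.re ≤ 1 / 2 ∧ AnalyticAt ℂ g α ∧ g α ≠ 0 ∧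
      ∀ᶠ z in 𝓝 α, riemannZeta z = (z - α) ^ m * g z := by
  have hα0 : α ≠ 0 := fun hc => by rw [hc] at h0; simp at h0
  have hα1 : α ≠ 1 := fun hc => by rw [hc] at h1; simp at h1
  have hG : Gammaℝ α ≠ 0 := Gammaℝ_ne_zero_of_re_pos h0
  have hα1' : α ∈ ({(1:ℂ)}ᶜ : Set ℂ) := hα1
  have hAn : AnalyticAt ℂ riemannZeta α := by
    refine DifferentiableOn.analyticAt (s := {(1:ℂ)}ᶜ)
      (fun z hz => (differentiableAt_riemannZeta hz).differentiableWithinAt)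
      (isOpen_compl_singleton.mem_nhds hα1')
  have hord_ne_top : analyticOrderAt riemannZeta α ≠ ⊤ := by
    intro htop
    rw [analyticOrderAt_eq_top] at htop
    have hOn : AnalyticOnNhd ℂ riemannZeta {(1:ℂ)}ᶜ :=
      DifferentiableOn.analyticOnNhd
        (fun z hz => (differentiableAt_riemannZeta hz).differentiableWithinAt)
        isOpen_compl_singleton
    have hpc : IsPreconnected ({(1:ℂ)}ᶜ : Set ℂ) :=
      (isConnected_compl_singleton_of_one_lt_rank
        (rank_real_complex ▸ Nat.one_lt_ofNat) _).isPreconnected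
    have h2mem : (2:ℂ) ∈ ({(1:ℂ)}ᶜ : Set ℂ) := by norm_num
    have hEq := hOn.eqOn_zero_of_preconnected_of_eventuallyEq_zero hpc hα1'
      (htop : riemannZeta =ᶠ[𝓝 α] 0)
    exact riemannZeta_ne_zero_of_one_le_re (by norm_num) (hEq h2mem)
  set m := (analyticOrderAt riemannZeta α).toNat with hm_def
  have hordm : analyticOrderAt riemannZeta α = m := (ENat.coe_toNat hord_ne_top).symm
  obtain ⟨g, hg_an, hg_ne, hg_ev⟩ := (hAn.analyticOrderAt_eq_natCast (n := m)).mp hordm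
  have hg_ev' : ∀ᶠ z in 𝓝 α, riemannZeta z = (z - α) ^ m * g z := by
    filter_upwards [hg_ev] with z hz using by simpa [smul_eq_mul] using hz
  have hm1 : 1 ≤ m := by
    rcases Nat.eq_zero_or_pos m with h' | h'
    · exfalso
      rw [h'] at hg_ev'
      have hself := hg_ev'.self_of_nhds
      rw [hζ] at hself
      simp at hself
      exact hg_ne hself.symm
    · exact h'
  obtain ⟨t, htP, hto, htα⟩ := eventually_nhds_iff.mp (hg_ev'.and hg_an.eventually_analyticAt)
  set U := t ∩ (Complex.re ⁻¹' Ioo 0 1) with hU_def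
  have hUopen : IsOpen U := hto.inter (isOpen_Ioo.preimage Complex.continuous_re)
  have hαU : α ∈ U := ⟨htα, ⟨h0, h1⟩⟩
  have hdiff : DifferentiableOn ℂ (fun z => xiFactor z * g z) U := by
    intro z hz
    exact ((diffAt_xiFactor (Gammaℝ_ne_zero_of_re_pos hz.2.1)).mul
      (htP z hz.1).2.differentiableAt).differentiableWithinAt
  have hne : xiFactor α * g α ≠ 0 := mul_ne_zero (xiFactor_ne_zero hα0 hα1 hG) hg_ne
  have hfac : ∀ z ∈ U, riemannXi z = (z - α) ^ m * (xiFactor z * g z) := by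
    intro z hz
    rw [riemannXi_eq, (htP z hz.1).1]; ring
  have key := H α m hm1 (fun z => xiFactor z * g z) U hUopen hαU hdiff hne hfac
  exact ⟨m, g, hm1, (abs_ge_iff hm1 hα0).mp key, hg_an, hg_ne, hg_ev'⟩

lemma backward_dir
    (H : ∀ (α : ℂ) (m : ℕ), 1 ≤ m →
        ∀ (h : ℂ → ℂ) (U : Set ℂ), IsOpen U → α ∈ U → DifferentiableOn ℂ h U → h α ≠ 0 →
        (∀ z ∈ U, riemannXi z = (z - α) ^ m * h z) →
        1 ≤ ‖1 - 1 / (m * α)‖) :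
    ∀ (α : ℂ), 0 < α.re → α.re < 1 → riemannZeta α = 0 →
        α.re = 1 / 2 ∧ deriv riemannZeta α ≠ 0 := by
  intro α h0 h1 hζ
  have hα0 : α ≠ 0 := fun hc => by rw [hc] at h0; simp at h0
  have hα1 : α ≠ 1 := fun hc => by rw [hc] at h1; simp at h1
  obtain ⟨m, g, hm1, hineq, hg_an, hg_ne, hg_ev⟩ := backward_step H h0 h1 hζ
  have hβζ : riemannZeta (1 - α) = 0 :=
    zeta_one_sub_zero' hα0 hα1 (Gammaℝ_ne_zero_of_re_pos h0) hζ
  have hβre : ((1:ℂ) - α).re = 1 - α.re := by simp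
  have hβ0 : 0 < ((1:ℂ) - α).re := by rw [hβre]; linarith
  have hβ1 : ((1:ℂ) - α).re < 1 := by rw [hβre]; linarith
  obtain ⟨m', g', hm1', hineq', _, _, _⟩ := backward_step H hβ0 hβ1 hβζ
  rw [hβre] at hineq'
  have hmr : (1:ℝ) ≤ m := by exact_mod_cast hm1
  have hmr' : (1:ℝ) ≤ m' := by exact_mod_cast hm1'
  have hre : α.re = 1 / 2 := by
    nlinarith [mul_nonneg (sub_nonneg.mpr hmr) h0.le,
      mul_nonneg (sub_nonneg.mpr hmr') (by linarith : (0:ℝ) ≤ 1 - α.re)]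
  refine ⟨hre, ?_⟩
  have hm_eq : m = 1 := by
    have hle : (m:ℝ) ≤ 1 := by rw [hre] at hineq; linarith
    exact le_antisymm (by exact_mod_cast hle) hm1
  subst hm_eq
  have hgd : HasDerivAt g (deriv g α) α := hg_an.differentiableAt.hasDerivAt
  have hD : HasDerivAt (fun z => (z - α) ^ 1 * g z)
      ((↑(1:ℕ) * (α - α) ^ (1-1) * 1) * g α + (α - α) ^ 1 * deriv g α) α :=
    (((hasDerivAt_id α).sub_const α).pow 1).mul hgd
  have hev : riemannZeta =ᶠ[𝓝 α] fun z => (z - α) ^ 1 * g z := hg_ev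
  have hder : deriv riemannZeta α = g α := by
    rw [hev.deriv_eq, hD.deriv]; simp
  rw [hder]; exact hg_ne

/-- The following are equivalent:
(a') every zero of `ζ` in the critical strip has real part `1/2` and is simple;
(b') every zero `α` of `ξ`, of order `m`, satisfies `|1 - 1/(mα)| = 1`, i.e. all fixed
points of `ν_ξ` are indifferent;
(c') every zero `α` of `ξ`, of order `m`, satisfies `|1 - 1/(mα)| ≥ 1`, i.e. `ν_ξ` has no
attracting fixed point. -/
theorem RH_simplicity_iff_xi_indifferent_iff_xi_no_attracting :
    ((∀ (α : ℂ), 0 < α.re → α.re < 1 → riemannZeta α = 0 →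
        α.re = 1 / 2 ∧ deriv riemannZeta α ≠ 0) ↔
      (∀ (α : ℂ) (m : ℕ), 1 ≤ m →
        ∀ (h : ℂ → ℂ) (U : Set ℂ), IsOpen U → α ∈ U → DifferentiableOn ℂ h U → h α ≠ 0 →
        (∀ z ∈ U, riemannXi z = (z - α) ^ m * h z) →
        ‖1 - 1 / (m * α)‖ = 1)) ∧
    ((∀ (α : ℂ), 0 < α.re → α.re < 1 → riemannZeta α = 0 →
        α.re = 1 / 2 ∧ deriv riemannZeta α ≠ 0) ↔
      (∀ (α : ℂ) (m : ℕ), 1 ≤ m →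
        ∀ (h : ℂ → ℂ) (U : Set ℂ), IsOpen U → α ∈ U → DifferentiableOn ℂ h U → h α ≠ 0 →
        (∀ z ∈ U, riemannXi z = (z - α) ^ m * h z) →
        1 ≤ ‖1 - 1 / (m * α)‖)) := by
  constructor
  · constructor
    · intro ha
      exact forward_dir ha
    · intro hb
      exact backward_dir (fun α m hm h U hU hαU hh hhα hfac =>
        le_of_eq (hb α m hm h U hU hαU hh hhα hfac).symm)
  · constructor
    · intro ha α m hm h U hU hαU hh hhα hfac
      exact le_of_eq (forward_dir ha α m hm h U hU hαU hh hhα hfac).symm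
    · exact backward_dir
end

section
/- Let γ ∈ ℝ, γ ≠ 0, and suppose α = 1/2 + γi is a simple zero of ζ (ζ(α) = 0, ζ'(α) ≠ 0). Then α is an indifferent fixed point of ν_ζ(z) = z − ζ(z)/(z ζ'(z)) with multiplier ν_ζ'(α) = e^{2πiθ}, where θ = (1/π) arctan(1/(2γ)); equivalently, γ = 1/(2 tan(πθ)). -/
open Complex

/-- A simple zero `α = 1/2 + γi` (`γ ≠ 0`) of `ζ` is an indifferent fixed point of `ν_ζ`
with multiplier `e^{2πiθ}` where `θ = (1/π) arctan(1/(2γ))`; equivalently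
`γ = 1/(2 tan(πθ))`. -/
theorem rotation_number_of_critical_zero
    (γ : ℝ) (hγ : γ ≠ 0)
    (hzero : riemannZeta (1 / 2 + γ * Complex.I) = 0)
    (hsimple : deriv riemannZeta (1 / 2 + γ * Complex.I) ≠ 0) :
    nuZeta (1 / 2 + γ * Complex.I) = 1 / 2 + γ * Complex.I ∧
    ‖deriv nuZeta (1 / 2 + γ * Complex.I)‖ = 1 ∧
    deriv nuZeta (1 / 2 + γ * Complex.I) =
      Complex.exp (2 * Real.pi * Complex.I *
        ((1 / Real.pi) * Real.arctan (1 / (2 * γ)))) ∧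
    γ = 1 / (2 * Real.tan (Real.pi * ((1 / Real.pi) * Real.arctan (1 / (2 * γ))))) := by
  set α : ℂ := 1 / 2 + γ * Complex.I with hαdef
  have hα1 : α ≠ 1 := by
    intro h
    apply hγ
    have := congrArg Complex.im h
    simpa [hαdef] using this
  have hα0 : α ≠ 0 := by
    intro h
    apply hγ
    have := congrArg Complex.im h
    simpa [hαdef] using this
  -- analyticity of ζ and ζ' near α
  have hopen : IsOpen {z : ℂ | z ≠ 1} := isOpen_compl_singleton
  have hζd : DifferentiableOn ℂ riemannZeta {z : ℂ | z ≠ 1} := fun z hz =>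
    (differentiableAt_riemannZeta hz).differentiableWithinAt
  have hAnhd : AnalyticOnNhd ℂ riemannZeta {z : ℂ | z ≠ 1} := fun z hz =>
    hζd.analyticAt (hopen.mem_nhds hz)
  have hA' : AnalyticAt ℂ (deriv riemannZeta) α := hAnhd.deriv α hα1
  -- derivative computations
  have h1 : HasDerivAt riemannZeta (deriv riemannZeta α) α :=
    (differentiableAt_riemannZeta hα1).hasDerivAt
  have h2 : HasDerivAt (fun z : ℂ => z * deriv riemannZeta z)
      (1 * deriv riemannZeta α + α * deriv (deriv riemannZeta) α) α :=
    (hasDerivAt_id α).mul hA'.differentiableAt.hasDerivAt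
  have hden : α * deriv riemannZeta α ≠ 0 := mul_ne_zero hα0 hsimple
  have h3 : HasDerivAt (fun z : ℂ => riemannZeta z / (z * deriv riemannZeta z))
      ((deriv riemannZeta α * (α * deriv riemannZeta α) -
        riemannZeta α * (1 * deriv riemannZeta α + α * deriv (deriv riemannZeta) α)) /
        (α * deriv riemannZeta α) ^ 2) α := h1.div h2 hden
  have hquot : (deriv riemannZeta α * (α * deriv riemannZeta α) -
        riemannZeta α * (1 * deriv riemannZeta α + α * deriv (deriv riemannZeta) α)) /
        (α * deriv riemannZeta α) ^ 2 = 1 / α := by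
    rw [hzero]
    field_simp
    ring
  have h4 : HasDerivAt nuZeta (1 - 1 / α) α := by
    have := (hasDerivAt_id α).sub h3
    rw [hquot] at this
    exact this
  have hd : deriv nuZeta α = 1 - 1 / α := h4.deriv
  -- the exponential
  have hγsq : (4 * γ ^ 2 + 1 : ℝ) ≠ 0 := by positivity
  have hx2 : (1 + (1 / (2 * γ)) ^ 2 : ℝ) ≠ 0 := by positivity
  have hcos2 : Real.cos (2 * Real.arctan (1 / (2 * γ))) = (4 * γ ^ 2 - 1) / (4 * γ ^ 2 + 1) := by
    rw [Real.cos_two_mul, Real.cos_sq_arctan]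
    field_simp
    ring
  have hsin2 : Real.sin (2 * Real.arctan (1 / (2 * γ))) = 4 * γ / (4 * γ ^ 2 + 1) := by
    have hsq : Real.sqrt (1 + (1 / (2 * γ)) ^ 2) ^ 2 = 1 + (1 / (2 * γ)) ^ 2 :=
      Real.sq_sqrt (by positivity)
    have hne : Real.sqrt (1 + (1 / (2 * γ)) ^ 2) ≠ 0 := by positivity
    have hD : Real.sqrt (1 + (1 / (2 * γ)) ^ 2) * Real.sqrt (1 + (1 / (2 * γ)) ^ 2)
        = 1 + (1 / (2 * γ)) ^ 2 := Real.mul_self_sqrt (by positivity)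
    rw [Real.sin_two_mul, Real.sin_arctan, Real.cos_arctan, mul_assoc, div_mul_div_comm, hD]
    field_simp
    ring
  have hπC : (Real.pi : ℂ) ≠ 0 := by exact_mod_cast Real.pi_ne_zero
  have harg : (2 * (Real.pi : ℂ) * Complex.I *
        (1 / (Real.pi : ℂ) * ((Real.arctan (1 / (2 * γ)) : ℝ) : ℂ)))
        = ((2 * Real.arctan (1 / (2 * γ)) : ℝ) : ℂ) * Complex.I := by
    push_cast
    field_simp
  have hexp : Complex.exp (2 * Real.pi * Complex.I *
        ((1 / Real.pi) * Real.arctan (1 / (2 * γ)))) = 1 - 1 / α := by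
    rw [harg, Complex.exp_mul_I, ← Complex.ofReal_cos, ← Complex.ofReal_sin, hcos2, hsin2]
    have hγC : (4 * (γ : ℂ) ^ 2 + 1) ≠ 0 := by
      intro h
      apply hγsq
      exact_mod_cast congrArg Complex.re h
    rw [hαdef]
    have h2α : (1 + (γ : ℂ) * Complex.I * 2) ≠ 0 := by
      intro h
      apply hγ
      have := congrArg Complex.im h
      simpa using this
    push_cast
    field_simp [hγC, h2α]
    linear_combination (8 * (γ : ℂ) ^ 2) * Complex.I_sq
  refine ⟨?_, ?_, ?_, ?_⟩
  · unfold nuZeta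
    rw [hzero]
    simp
  · rw [hd, ← hexp, harg]
    exact Complex.norm_exp_ofReal_mul_I _
  · rw [hd, hexp]
  · have hπ : Real.pi ≠ 0 := Real.pi_ne_zero
    rw [show Real.pi * ((1 / Real.pi) * Real.arctan (1 / (2 * γ))) = Real.arctan (1 / (2 * γ)) by
      field_simp]
    rw [Real.tan_arctan]
    field_simp
end

section
/- Let κ ∈ ℂ with |κ − 1| < 1, let α ∈ ℂ, and let g be holomorphic on a neighborhood of α with a zero of order m ≥ 1 at α (g(z) = (z−α)^m h(z), h(α) ≠ 0). Then the relaxed Newton map N_{g,κ}(z) = z − κ g(z)/g'(z) has a removable singularity at α; its holomorphic extension F satisfies F(α) = α and F'(α) = 1 − κ/m with |1 − κ/m| < 1 (so α is an attracting fixed point), and for all sufficiently small r > 0, (1/(2πi)) ∮_{|z−α|=r} dz/(z − N_{g,κ}(z)) = m/κ. -/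
open Complex Metric

/-- The relaxed Newton map of `g` with parameter `κ`: `N_{g,κ}(z) = z - κ g(z)/g'(z)`. -/
noncomputable def relaxedNewton (κ : ℂ) (g : ℂ → ℂ) (z : ℂ) : ℂ :=
  z - κ * (g z / deriv g z)

/-- If `g` has a zero of order `m ≥ 1` at `α` and `|κ - 1| < 1`, then the relaxed Newton
map `N_{g,κ}` has a removable singularity at `α`; its holomorphic extension `F` satisfies
`F α = α` and `F' α = 1 - κ/m` with `|1 - κ/m| < 1` (so `α` is an attracting fixed point),
and the holomorphic index of `N_{g,κ}` at `α` is `m/κ`. -/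
theorem relaxedNewton_at_zero_of_order
    (κ : ℂ) (hκ : ‖κ - 1‖ < 1)
    (α : ℂ) (m : ℕ) (hm : 1 ≤ m)
    (g h : ℂ → ℂ) (U : Set ℂ) (hU : IsOpen U) (hαU : α ∈ U)
    (hh : DifferentiableOn ℂ h U) (hhα : h α ≠ 0)
    (hfact : ∀ z ∈ U, g z = (z - α) ^ m * h z) :
    ∃ (F : ℂ → ℂ) (V : Set ℂ), IsOpen V ∧ α ∈ V ∧ DifferentiableOn ℂ F V ∧
      (∀ z ∈ V, z ≠ α → F z = relaxedNewton κ g z) ∧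
      F α = α ∧ deriv F α = 1 - κ / m ∧ ‖1 - κ / m‖ < 1 ∧
      ∃ r₀ > 0, ∀ r : ℝ, 0 < r → r < r₀ →
        (2 * Real.pi * Complex.I)⁻¹ *
          (∮ z in C(α, r), (z - relaxedNewton κ g z)⁻¹) = m / κ := by
  have hκ0 : κ ≠ 0 := by
    intro h0; rw [h0] at hκ; simp at hκ
  have hm0 : (m : ℂ) ≠ 0 := Nat.cast_ne_zero.mpr (by omega)
  set D : ℂ → ℂ := fun z => m * h z + (z - α) * deriv h z with hDdef
  have hhA : AnalyticOnNhd ℂ h U := hh.analyticOnNhd hU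
  have hh' : DifferentiableOn ℂ (deriv h) U := hhA.deriv.differentiableOn
  have hDdiff : DifferentiableOn ℂ D U := by
    apply DifferentiableOn.add
    · exact (differentiableOn_const _).mul hh
    · exact ((differentiableOn_id.sub (differentiableOn_const _))).mul hh'
  have hDα : D α = m * h α := by simp [hDdef]
  have hDα0 : D α ≠ 0 := by rw [hDα]; exact mul_ne_zero hm0 hhα
  -- differentiability at points of U
  have hdh : ∀ z ∈ U, DifferentiableAt ℂ h z := fun z hz => (hh.differentiableAt (hU.mem_nhds hz))
  have hdh' : ∀ z ∈ U, DifferentiableAt ℂ (deriv h) z := fun z hz => (hh'.differentiableAt (hU.mem_nhds hz))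
  -- derivative of g on U
  have hgderiv : ∀ z ∈ U, HasDerivAt g ((z - α) ^ (m - 1) * D z) z := by
    intro z hz
    have h1 : HasDerivAt (fun w => (w - α) ^ m * h w)
        ((m * (z - α) ^ (m - 1) * 1) * h z + (z - α) ^ m * deriv h z) z :=
      (((hasDerivAt_id z).sub_const α).pow m).mul (hdh z hz).hasDerivAt
    have hpow : (z - α) ^ m = (z - α) ^ (m - 1) * (z - α) := by
      conv_lhs => rw [show m = (m - 1) + 1 by omega]
      rw [pow_succ]
    have h2 : HasDerivAt (fun w => (w - α) ^ m * h w) ((z - α) ^ (m - 1) * D z) z := by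
      convert h1 using 1
      rw [hpow]; simp [hDdef]; ring
    exact h2.congr_of_eventuallyEq
      (Filter.eventuallyEq_of_mem (hU.mem_nhds hz) hfact)
  -- the extension
  set F : ℂ → ℂ := fun z => z - κ * ((z - α) * h z / D z) with hFdef
  -- key pointwise identity
  have hkey : ∀ z ∈ U, z ≠ α → D z ≠ 0 → F z = relaxedNewton κ g z := by
    intro z hz hzα hDz
    have hzα' : z - α ≠ 0 := sub_ne_zero.mpr hzα
    have hd : deriv g z = (z - α) ^ (m - 1) * D z := (hgderiv z hz).deriv
    have hg : g z = (z - α) ^ (m - 1) * ((z - α) * h z) := by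
      rw [hfact z hz]
      conv_lhs => rw [show m = (m - 1) + 1 by omega]
      rw [pow_succ]; ring
    simp only [relaxedNewton, hFdef, hd, hg,
      mul_div_mul_left _ _ (pow_ne_zero (m - 1) hzα')]
  -- the open set
  set V : Set ℂ := (U ∩ D ⁻¹' {0}ᶜ) ∩ (U ∩ h ⁻¹' {0}ᶜ) with hVdef
  have hVopen : IsOpen V :=
    (hDdiff.continuousOn.isOpen_inter_preimage hU isOpen_compl_singleton).inter
      (hh.continuousOn.isOpen_inter_preimage hU isOpen_compl_singleton)
  have hαV : α ∈ V := ⟨⟨hαU, hDα0⟩, ⟨hαU, hhα⟩⟩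
  have hVU : V ⊆ U := fun z hz => hz.1.1
  have hVD : ∀ z ∈ V, D z ≠ 0 := fun z hz => hz.1.2
  have hVh : ∀ z ∈ V, h z ≠ 0 := fun z hz => hz.2.2
  have hFdiff : DifferentiableOn ℂ F V := by
    apply DifferentiableOn.sub differentiableOn_id
    apply DifferentiableOn.const_mul
    exact DifferentiableOn.div
      (((differentiableOn_id.sub (differentiableOn_const _))).mul (hh.mono hVU))
      (hDdiff.mono hVU) hVD
  -- deriv F α
  have hNα : HasDerivAt (fun z => (z - α) * h z) (1 * h α + (α - α) * deriv h α) α :=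
    ((hasDerivAt_id α).sub_const α).mul (hdh α hαU).hasDerivAt
  have hDα' : HasDerivAt D ((0 : ℂ) * h α + (m : ℂ) * deriv h α +
      ((1 * deriv h α + (α - α) * deriv (deriv h) α))) α := by
    apply HasDerivAt.add
    · exact (hasDerivAt_const α (m : ℂ)).mul (hdh α hαU).hasDerivAt
    · exact ((hasDerivAt_id α).sub_const α).mul (hdh' α hαU).hasDerivAt
  have hFderivAt : HasDerivAt F (1 - κ *
      (((1 * h α + (α - α) * deriv h α) * D α - ((α - α) * h α) *
        ((0 : ℂ) * h α + (m : ℂ) * deriv h α +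
          ((1 * deriv h α + (α - α) * deriv (deriv h) α)))) / D α ^ 2)) α :=
    (hasDerivAt_id α).sub (((hNα.div hDα' hDα0)).const_mul κ)
  have hFderiv : deriv F α = 1 - κ / m := by
    rw [hFderivAt.deriv, hDα]
    field_simp
    ring
  -- attraction
  have hattr : ‖1 - κ / m‖ < 1 := by
    have e : (1 : ℂ) - κ / m = ((m : ℂ) - κ) / m := by field_simp
    have habsm : ‖((m : ℂ))‖ = (m : ℝ) := by
      rw [show ((m : ℂ)) = (((m : ℝ)) : ℂ) by push_cast; ring, Complex.norm_real, Real.norm_eq_abs,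
        _root_.abs_of_nonneg (by positivity)]
    have hm1 : ‖((m : ℂ) - 1)‖ = (m : ℝ) - 1 := by
      rw [show ((m : ℂ) - 1) = (((m : ℝ) - 1 : ℝ) : ℂ) by push_cast; ring, Complex.norm_real, Real.norm_eq_abs,
        _root_.abs_of_nonneg (by simp; exact_mod_cast hm)]
    have h1κ : ‖(1 - κ)‖ = ‖(κ - 1)‖ := by
      rw [← neg_sub, norm_neg]
    have hlt : ‖((m : ℂ) - κ)‖ < (m : ℝ) := by
      calc ‖((m : ℂ) - κ)‖ = ‖(((m : ℂ) - 1) + (1 - κ))‖ := by ring_nf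
        _ ≤ ‖((m : ℂ) - 1)‖ + ‖(1 - κ)‖ := norm_add_le _ _
        _ < ((m : ℝ) - 1) + 1 := by rw [hm1, h1κ]; linarith
        _ = (m : ℝ) := by ring
    rw [e, norm_div, habsm]
    rw [div_lt_one (by exact_mod_cast (by omega : 0 < m))]
    exact hlt
  -- radius
  obtain ⟨r₀, hr₀pos, hball⟩ := Metric.isOpen_iff.mp hVopen α hαV
  refine ⟨F, V, hVopen, hαV, hFdiff,
    fun z hz hzα => hkey z (hVU hz) hzα (hVD z hz), by simp [hFdef], hFderiv, hattr,
    r₀, hr₀pos, ?_⟩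
  intro r hr hrr₀
  set φ : ℂ → ℂ := fun z => D z / (κ * h z) with hφdef
  have hsub : closedBall α r ⊆ V := fun z hz =>
    hball (lt_of_le_of_lt (mem_closedBall.mp hz) hrr₀)
  have hφdiff : DifferentiableOn ℂ φ V :=
    (hDdiff.mono hVU).div ((differentiableOn_const _).mul (hh.mono hVU))
      (fun z hz => mul_ne_zero hκ0 (hVh z hz))
  have hdc : DiffContOnCl ℂ φ (ball α r) :=
    ⟨hφdiff.mono ((ball_subset_closedBall).trans hsub),
     by rw [closure_ball α (ne_of_gt hr)]; exact (hφdiff.mono hsub).continuousOn⟩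
  have hint : (∮ z in C(α, r), (z - α)⁻¹ • φ z) = (2 * Real.pi * I) • φ α :=
    hdc.circleIntegral_sub_inv_smul (mem_ball_self hr)
  have hcongr : (∮ z in C(α, r), (z - relaxedNewton κ g z)⁻¹)
      = ∮ z in C(α, r), (z - α)⁻¹ • φ z := by
    apply circleIntegral.integral_congr hr.le
    intro z hz
    have hzV : z ∈ V := hsub (sphere_subset_closedBall hz)
    have hzα : z ≠ α := ne_of_mem_sphere hz hr.ne'
    have hzα' : z - α ≠ 0 := sub_ne_zero.mpr hzα
    have e1 : z - relaxedNewton κ g z = κ * ((z - α) * h z / D z) := by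
      rw [← hkey z (hVU hzV) hzα (hVD z hzV)]; simp [hFdef]
    show (z - relaxedNewton κ g z)⁻¹ = (z - α)⁻¹ • φ z
    rw [e1, smul_eq_mul, hφdef]
    have hDz := hVD z hzV
    have hhz := hVh z hzV
    field_simp
  rw [hcongr, hint, smul_eq_mul]
  have h2πi : (2 * (Real.pi : ℂ) * I) ≠ 0 := by
    simp [Real.pi_ne_zero, I_ne_zero]
  have hφα : φ α = m / κ := by
    simp only [hφdef, hDα]
    rw [mul_comm κ (h α), mul_comm (m : ℂ) (h α), mul_div_mul_left _ _ hhα]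
  rw [hφα, ← mul_assoc, inv_mul_cancel₀ h2πi, one_mul]
end
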